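/- Let G be a trigraph, v a vertex of G with red degree 0, and A ⊆ V(G)∖{v}. Then tww(G, A∪{v}) ≤ 2·tww(G−v, A) + 2. -/

import Mathlib

open scoped Classical

noncomputable section

/-- A trigraph: a finite graph whose edges are colored black or red. -/
structure Trigraph (V : Type*) where
  black : V → V → Prop
  red : V → V → Prop
  black_symm : ∀ u v, black u v → black v u
  red_symm : ∀ u v, red u v → red v u
  black_irrefl : ∀ v, ¬ black v v
  red_irrefl : ∀ v, ¬ red v v
  not_black_and_red : ∀ u v, ¬ (black u v ∧ red u v)

variable {V : Type*}

/-- A simple graph seen as a trigraph with no red edges. -/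
def SimpleGraph.toTrigraph (G : SimpleGraph V) : Trigraph V where
  black := G.Adj
  red _ _ := False
  black_symm _ _ h := h.symm
  red_symm _ _ h := h.elim
  black_irrefl _ h := G.irrefl h
  red_irrefl _ h := h
  not_black_and_red _ _ h := h.2

/-- Induced subtrigraph on a set of vertices. -/
def Trigraph.induce (G : Trigraph V) (s : Set V) : Trigraph s where
  black u v := G.black u.1 v.1
  red u v := G.red u.1 v.1
  black_symm _ _ h := G.black_symm _ _ h
  red_symm _ _ h := G.red_symm _ _ h
  black_irrefl v := G.black_irrefl v.1
  red_irrefl v := G.red_irrefl v.1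
  not_black_and_red u v := G.not_black_and_red u.1 v.1

/-- The discrete partition of the vertex set into singletons. -/
def discretePart (V : Type*) [Fintype V] : Finset (Finset V) :=
  Finset.univ.image fun v => ({v} : Finset V)

/-- `Q` is obtained from the partition `P` by merging (contracting) two distinct parts. -/
def MergeStep (P Q : Finset (Finset V)) : Prop :=
  ∃ A ∈ P, ∃ B ∈ P, A ≠ B ∧ Q = insert (A ∪ B) ((P.erase A).erase B)

/-- Two parts are joined by a red edge in the quotient trigraph if there is a red edge
between them, or if they are not homogeneously connected by black edges. -/
def Trigraph.redAdj (G : Trigraph V) (A B : Finset V) : Prop :=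
  A ≠ B ∧ ((∃ a ∈ A, ∃ b ∈ B, G.red a b) ∨
    ((∃ a ∈ A, ∃ b ∈ B, G.black a b) ∧ ¬ ∀ a ∈ A, ∀ b ∈ B, G.black a b))

/-- The red degree of a part `A` in the quotient of `G` by the partition `P`. -/
def Trigraph.redDeg (G : Trigraph V) (P : Finset (Finset V)) (A : Finset V) : ℕ :=
  (P.filter fun B => G.redAdj A B).card

/-- The maximum red degree of the quotient of `G` by the partition `P`. -/
def Trigraph.maxRedDeg (G : Trigraph V) (P : Finset (Finset V)) : ℕ :=
  P.sup fun A => G.redDeg P A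

/-- A contraction sequence of partitions: starts with the discrete partition, and each
step merges two parts. -/
def IsCSeq (V : Type*) [Fintype V] (len : ℕ) (f : ℕ → Finset (Finset V)) : Prop :=
  f 0 = discretePart V ∧ ∀ i < len, MergeStep (f i) (f (i + 1))

/-- The twin-width of a trigraph: the minimum over all complete contraction sequences of
the maximum red degree attained. -/
def Trigraph.tww [Fintype V] (G : Trigraph V) : ℕ :=
  sInf { w | ∃ f : ℕ → Finset (Finset V),
    IsCSeq V (Fintype.card V - 1) f ∧
    f (Fintype.card V - 1) = {Finset.univ} ∧
    ∀ i ≤ Fintype.card V - 1, G.maxRedDeg (f i) ≤ w }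

/-- The final partition of a `U`-contraction sequence: `U` is one part,
all other vertices are singletons. -/
def finalOn (V : Type*) [Fintype V] (U : Finset V) : Finset (Finset V) :=
  insert U ((Finset.univ \ U).image fun v => ({v} : Finset V))

/-- `tww_U(G)`: the minimum width of a partial contraction sequence involving only
vertices of `U` and contracting `U` into a single part. -/
def Trigraph.twwOn [Fintype V] (G : Trigraph V) (U : Finset V) : ℕ :=
  sInf { w | ∃ f : ℕ → Finset (Finset V),
    IsCSeq V (U.card - 1) f ∧ f (U.card - 1) = finalOn V U ∧
    ∀ i ≤ U.card - 1, G.maxRedDeg (f i) ≤ w }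

/-- A partition respects `A` if all vertices of `A` are singleton parts of red degree `0`. -/
def Trigraph.Respects (G : Trigraph V) (A : Finset V) (P : Finset (Finset V)) : Prop :=
  (∀ a ∈ A, ({a} : Finset V) ∈ P) ∧ ∀ a ∈ A, G.redDeg P {a} = 0

/-- A partition respecting `A` is complete if no two parts outside `A` have the same
(black) neighborhood in `A`. -/
def Trigraph.CompleteFor (G : Trigraph V) (A : Finset V) (P : Finset (Finset V)) : Prop :=
  ∀ B ∈ P, ∀ C ∈ P, B ≠ C → Disjoint B A → Disjoint C A →
    ¬ ∀ a ∈ A, ((∃ b ∈ B, G.black b a) ↔ ∃ c ∈ C, G.black c a)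

/-- `tww(G, A)`: the minimum width of a complete contraction sequence respecting `A`. -/
def Trigraph.twwR [Fintype V] (G : Trigraph V) (A : Finset V) : ℕ :=
  sInf { w | ∃ (len : ℕ) (f : ℕ → Finset (Finset V)), IsCSeq V len f ∧
    (∀ i ≤ len, G.Respects A (f i)) ∧ G.CompleteFor A (f len) ∧
    ∀ i ≤ len, G.maxRedDeg (f i) ≤ w }


namespace ApexAux

variable {V : Type*}

/-- Partition invariant: nonempty, pairwise disjoint parts covering the universe. -/
def IsPart (P : Finset (Finset V)) : Prop :=
  (∀ X ∈ P, X.Nonempty) ∧ (∀ X ∈ P, ∀ Y ∈ P, X ≠ Y → Disjoint X Y) ∧ ∀ u : V, ∃ X ∈ P, u ∈ X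

lemma isPart_discrete [Fintype V] : IsPart (discretePart V) := by
  refine ⟨?_, ?_, ?_⟩
  · intro X hX
    simp only [discretePart, Finset.mem_image] at hX
    obtain ⟨u, -, rfl⟩ := hX
    exact ⟨u, Finset.mem_singleton_self u⟩
  · intro X hX Y hY hne
    simp only [discretePart, Finset.mem_image] at hX hY
    obtain ⟨u, -, rfl⟩ := hX; obtain ⟨w, -, rfl⟩ := hY
    simp only [Finset.disjoint_singleton]
    rintro rfl; exact hne rfl
  · intro u
    exact ⟨{u}, Finset.mem_image_of_mem _ (Finset.mem_univ u), Finset.mem_singleton_self u⟩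

lemma IsPart.merge {P Q : Finset (Finset V)} (h : IsPart P) (hm : MergeStep P Q) : IsPart Q := by
  obtain ⟨B, hB, C, hC, hBC, rfl⟩ := hm
  obtain ⟨hne, hdisj, hcov⟩ := h
  refine ⟨?_, ?_, ?_⟩
  · intro X hX
    rcases Finset.mem_insert.1 hX with rfl | hX
    · exact (hne B hB).mono Finset.subset_union_left
    · exact hne X (Finset.mem_of_mem_erase (Finset.mem_of_mem_erase hX))
  · intro X hX Y hY hXY
    rcases Finset.mem_insert.1 hX with rfl | hX <;> rcases Finset.mem_insert.1 hY with rfl | hY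
    · exact absurd rfl hXY
    · have hY1 := Finset.mem_of_mem_erase (Finset.mem_of_mem_erase hY)
      have hYB : Y ≠ B := Finset.ne_of_mem_erase (Finset.mem_of_mem_erase hY)
      have hYC : Y ≠ C := Finset.ne_of_mem_erase hY
      exact Finset.disjoint_union_left.2 ⟨(hdisj _ hB _ hY1 (Ne.symm hYB)), (hdisj _ hC _ hY1 (Ne.symm hYC))⟩
    · have hX1 := Finset.mem_of_mem_erase (Finset.mem_of_mem_erase hX)
      have hXB : X ≠ B := Finset.ne_of_mem_erase (Finset.mem_of_mem_erase hX)
      have hXC : X ≠ C := Finset.ne_of_mem_erase hX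
      exact Finset.disjoint_union_right.2 ⟨hdisj _ hX1 _ hB hXB, hdisj _ hX1 _ hC hXC⟩
    · exact hdisj _ (Finset.mem_of_mem_erase (Finset.mem_of_mem_erase hX)) _
        (Finset.mem_of_mem_erase (Finset.mem_of_mem_erase hY)) hXY
  · intro u
    obtain ⟨X, hX, hu⟩ := hcov u
    by_cases hXB : X = B
    · exact ⟨B ∪ C, Finset.mem_insert_self _ _, Finset.mem_union_left _ (hXB ▸ hu)⟩
    by_cases hXC : X = C
    · exact ⟨B ∪ C, Finset.mem_insert_self _ _, Finset.mem_union_right _ (hXC ▸ hu)⟩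
    · exact ⟨X, Finset.mem_insert_of_mem (Finset.mem_erase.2 ⟨hXC, Finset.mem_erase.2 ⟨hXB, hX⟩⟩), hu⟩

lemma MergeStep.card_lt {P Q : Finset (Finset V)} (h : IsPart P) (hm : MergeStep P Q) :
    Q.card < P.card := by
  obtain ⟨B, hB, C, hC, hBC, rfl⟩ := hm
  have h2 : ((P.erase B).erase C).card = P.card - 2 := by
    rw [Finset.card_erase_of_mem (Finset.mem_erase.2 ⟨Ne.symm hBC, hC⟩),
      Finset.card_erase_of_mem hB]
    omega
  have hcard2 : 2 ≤ P.card := Finset.one_lt_card.2 ⟨B, hB, C, hC, hBC⟩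
  calc (insert (B ∪ C) ((P.erase B).erase C)).card ≤ ((P.erase B).erase C).card + 1 :=
        Finset.card_insert_le _ _
    _ < P.card := by omega

lemma eq_singleton_of_mem {P : Finset (Finset V)} (h : IsPart P) {X : Finset V} (hX : X ∈ P)
    {a : V} (ha : ({a} : Finset V) ∈ P) (haX : a ∈ X) : X = {a} := by
  by_contra hne
  exact (Finset.disjoint_left.1 (h.2.1 X hX {a} ha hne) haX) (Finset.mem_singleton_self a)

lemma isPart_of_cseq [Fintype V] {len : ℕ} {f : ℕ → Finset (Finset V)}
    (h : IsCSeq V len f) : ∀ i ≤ len, IsPart (f i) := by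
  intro i hi
  induction i with
  | zero => rw [h.1]; exact isPart_discrete
  | succ n ih =>
    exact (ih (Nat.le_of_succ_le hi)).merge (h.2 n (Nat.lt_of_succ_le hi))

lemma chain_to_seq [Fintype V] {L : List (Finset (Finset V))} (hne : L ≠ [])
    (hhead : L.head hne = discretePart V) (hchain : L.Chain' MergeStep) :
    ∃ (len : ℕ) (f : ℕ → Finset (Finset V)), IsCSeq V len f ∧ f len = L.getLast hne ∧
      ∀ i ≤ len, f i ∈ L := by
  have hlen : 0 < L.length := List.length_pos_iff.2 hne
  refine ⟨L.length - 1, fun i => L.getD i (discretePart V), ⟨?_, ?_⟩, ?_, ?_⟩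
  · show L.getD 0 _ = _
    rw [List.getD_eq_getElem L _ hlen]
    rw [← hhead]
    exact (List.getElem_zero hlen).symm ▸ (List.head_eq_getElem_zero hne).symm
  · intro i hi
    have h1 : i < L.length := by omega
    have h2 : i + 1 < L.length := by omega
    show MergeStep (L.getD i _) (L.getD (i+1) _)
    rw [List.getD_eq_getElem L _ h1, List.getD_eq_getElem L _ h2]
    exact List.isChain_iff_getElem.1 hchain i (by omega)
  · have h1 : L.length - 1 < L.length := by omega
    show L.getD _ _ = _
    rw [List.getD_eq_getElem L _ h1, List.getLast_eq_getElem]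
  · intro i hi
    have h1 : i < L.length := by omega
    show L.getD _ _ ∈ L
    rw [List.getD_eq_getElem L _ h1]
    exact List.getElem_mem h1

lemma exists_mergechain {R : Finset (Finset V)} (hR : IsPart R) :
    ∀ (n : ℕ) (P : Finset (Finset V)), P.card ≤ n → IsPart P → (∀ X ∈ P, ∃ D ∈ R, X ⊆ D) →
    ∃ (L : List (Finset (Finset V))) (hne : L ≠ []), L.head hne = P ∧ L.Chain' MergeStep ∧
      L.getLast hne = R ∧ ∀ Pi ∈ L, IsPart Pi ∧ ∀ X ∈ Pi, ∃ D ∈ R, X ⊆ D := by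
  intro n
  induction n with
  | zero =>
    intro P hPc hP href
    -- P is empty, so V is empty, so R = P
    have hPe : P = ∅ := Finset.card_eq_zero.1 (Nat.le_zero.1 hPc)
    have hRP : R = P := by
      rw [hPe]
      by_contra hRne
      obtain ⟨D, hD⟩ := Finset.nonempty_iff_ne_empty.2 hRne
      obtain ⟨u, hu⟩ := hR.1 D hD
      obtain ⟨X, hX, -⟩ := hP.2.2 u
      rw [hPe] at hX; exact absurd hX (Finset.notMem_empty X)
    exact ⟨[P], by simp, rfl, List.isChain_singleton P, by simp [hRP], by
      intro Pi hPi; simp at hPi; subst hPi; exact ⟨hP, href⟩⟩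
  | succ n ih =>
    intro P hPc hP href
    by_cases hPR : P = R
    · exact ⟨[P], by simp, rfl, List.isChain_singleton P, by simp [hPR], by
        intro Pi hPi; simp at hPi; subst hPi; exact ⟨hP, href⟩⟩
    -- find a part X strictly inside its parent D
    have hstrict : ∃ X ∈ P, ∃ D ∈ R, X ⊆ D ∧ X ≠ D := by
      by_contra hc
      push_neg at hc
      apply hPR
      have hPsub : P ⊆ R := by
        intro X hX
        obtain ⟨D, hD, hXD⟩ := href X hX
        rw [hc X hX D hD hXD]; exact hD
      apply Finset.Subset.antisymm hPsub
      intro D hD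
      obtain ⟨u, hu⟩ := hR.1 D hD
      obtain ⟨X, hX, huX⟩ := hP.2.2 u
      obtain ⟨D', hD', hXD'⟩ := href X hX
      have hXD'2 := hc X hX D' hD' hXD'
      subst hXD'2
      have : X = D := by
        by_contra hne
        exact (Finset.disjoint_left.1 (hR.2.1 X hD' D hD hne) huX) hu
      exact this ▸ hX
    obtain ⟨X, hX, D, hD, hXD, hXneD⟩ := hstrict
    -- find w ∈ D \ X and its part Y
    have : ∃ w ∈ D, w ∉ X := by
      by_contra hc; push_neg at hc
      exact hXneD (Finset.Subset.antisymm hXD hc)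
    obtain ⟨w, hwD, hwX⟩ := this
    obtain ⟨Y, hY, hwY⟩ := hP.2.2 w
    obtain ⟨D', hD', hYD'⟩ := href Y hY
    have hDD' : D' = D := by
      by_contra hne
      exact (Finset.disjoint_left.1 (hR.2.1 D' hD' D hD hne) (hYD' hwY)) hwD
    rw [hDD'] at hD' hYD'
    have hXY : X ≠ Y := fun h => hwX (h ▸ hwY)
    set P' := insert (X ∪ Y) ((P.erase X).erase Y) with hP'
    have hm : MergeStep P P' := ⟨X, hX, Y, hY, hXY, rfl⟩
    have hP'p : IsPart P' := hP.merge hm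
    have hP'ref : ∀ Z ∈ P', ∃ E ∈ R, Z ⊆ E := by
      intro Z hZ
      rcases Finset.mem_insert.1 hZ with rfl | hZ
      · exact ⟨D, hD, Finset.union_subset hXD hYD'⟩
      · exact href Z (Finset.mem_of_mem_erase (Finset.mem_of_mem_erase hZ))
    have hP'c : P'.card ≤ n := by
      have := MergeStep.card_lt hP hm
      omega
    obtain ⟨L, hne, hhead, hchain, hlast, hmem⟩ := ih P' hP'c hP'p hP'ref
    refine ⟨P :: L, by simp, rfl, ?_, ?_, ?_⟩
    · rw [List.Chain', List.isChain_cons]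
      exact ⟨fun y hy => by rw [List.head?_eq_head hne] at hy; cases hy; rw [hhead]; exact hm,
        hchain⟩
    · rw [List.getLast_cons hne]; exact hlast
    · intro Pi hPi
      rcases List.mem_cons.1 hPi with rfl | hPi
      · exact ⟨hP, href⟩
      · exact hmem Pi hPi

lemma redAdj_comm {G : Trigraph V} {X Y : Finset V} (h : G.redAdj X Y) : G.redAdj Y X := by
  obtain ⟨hne, h⟩ := h
  refine ⟨hne.symm, ?_⟩
  rcases h with ⟨a, ha, b, hb, hr⟩ | ⟨⟨a, ha, b, hb, hbl⟩, hnall⟩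
  · exact Or.inl ⟨b, hb, a, ha, G.red_symm _ _ hr⟩
  · refine Or.inr ⟨⟨b, hb, a, ha, G.black_symm _ _ hbl⟩, fun hall => hnall ?_⟩
    intro x hx y hy; exact G.black_symm _ _ (hall y hy x hx)

lemma redDeg_eq_zero_iff {G : Trigraph V} {P : Finset (Finset V)} {X : Finset V} :
    G.redDeg P X = 0 ↔ ∀ Y ∈ P, ¬ G.redAdj X Y := by
  rw [Trigraph.redDeg, Finset.card_eq_zero, Finset.filter_eq_empty_iff]

/-- Existence of a complete respecting contraction sequence when `A` has no
incident red edges. -/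
lemma exists_complete_seq {W : Type*} [Fintype W] (H : Trigraph W) (A : Finset W)
    (hA : ∀ a ∈ A, ∀ u, ¬ H.red a u) :
    ∃ (len : ℕ) (f : ℕ → Finset (Finset W)), IsCSeq W len f ∧
      (∀ i ≤ len, H.Respects A (f i)) ∧ H.CompleteFor A (f len) := by
  classical
  set cls : W → Finset W := fun u =>
    if u ∈ A then {u}
    else Finset.univ.filter (fun w => w ∉ A ∧ ∀ a ∈ A, (H.black w a ↔ H.black u a)) with hcls
  have hmem_cls : ∀ u, u ∈ cls u := by
    intro u
    by_cases hu : u ∈ A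
    · simp [hcls, hu]
    · simp [hcls, hu]
  have hcls_eq : ∀ u w, w ∈ cls u → cls w = cls u := by
    intro u w hw
    by_cases hu : u ∈ A
    · simp only [hcls, hu, if_pos, Finset.mem_singleton] at hw
      subst hw; rfl
    · simp only [hcls, hu, if_neg, not_false_iff, Finset.mem_filter] at hw
      obtain ⟨-, hwA, hiff⟩ := hw
      simp only [hcls, if_neg hwA, if_neg hu]
      ext z
      simp only [Finset.mem_filter, Finset.mem_univ, true_and]
      constructor
      · rintro ⟨hz, h⟩; exact ⟨hz, fun a ha => (h a ha).trans (hiff a ha)⟩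
      · rintro ⟨hz, h⟩; exact ⟨hz, fun a ha => (h a ha).trans (hiff a ha).symm⟩
  set R : Finset (Finset W) := Finset.univ.image cls with hRdef
  have hclsR : ∀ u, cls u ∈ R := fun u => Finset.mem_image_of_mem _ (Finset.mem_univ u)
  have hR : IsPart R := by
    refine ⟨?_, ?_, ?_⟩
    · intro X hX
      obtain ⟨u, -, rfl⟩ := Finset.mem_image.1 hX
      exact ⟨u, hmem_cls u⟩
    · intro X hX Y hY hne
      obtain ⟨u, -, rfl⟩ := Finset.mem_image.1 hX
      obtain ⟨u', -, rfl⟩ := Finset.mem_image.1 hY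
      rw [Finset.disjoint_left]
      intro w hw hw'
      exact hne ((hcls_eq u w hw).symm.trans (hcls_eq u' w hw'))
    · intro u; exact ⟨cls u, hclsR u, hmem_cls u⟩
  have hcls_black : ∀ u, u ∉ A → ∀ y ∈ cls u, ∀ a ∈ A, (H.black y a ↔ H.black u a) := by
    intro u hu y hy a ha
    simp only [hcls, if_neg hu, Finset.mem_filter] at hy
    exact hy.2.2 a ha
  obtain ⟨L, hne, hhead, hchain, hlast, hmemL⟩ :=
    exists_mergechain hR (discretePart W).card (discretePart W) le_rfl isPart_discrete
      (by
        intro X hX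
        obtain ⟨u, -, rfl⟩ := Finset.mem_image.1 hX
        exact ⟨cls u, hclsR u, Finset.singleton_subset_iff.2 (hmem_cls u)⟩)
  obtain ⟨len, f, hseq, hflen, hfmem⟩ := chain_to_seq hne hhead hchain
  have hresp : ∀ Pi ∈ L, H.Respects A Pi := by
    intro Pi hPi
    obtain ⟨hPip, hPiref⟩ := hmemL Pi hPi
    constructor
    · intro a ha
      obtain ⟨X, hX, haX⟩ := hPip.2.2 a
      obtain ⟨D, hD, hXD⟩ := hPiref X hX
      obtain ⟨u, -, rfl⟩ := Finset.mem_image.1 hD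
      have h1 : cls a = cls u := hcls_eq u a (hXD haX)
      have h2 : cls a = {a} := by simp [hcls, ha]
      have hXa : X ⊆ {a} := by rw [← h2, h1]; exact hXD
      rcases Finset.subset_singleton_iff.1 hXa with rfl | rfl
      · simpa using hPip.1 ∅ hX
      · exact hX
    · intro a ha
      rw [redDeg_eq_zero_iff]
      rintro Y hY ⟨hneY, hcase⟩
      obtain ⟨D, hD, hYD⟩ := hPiref Y hY
      obtain ⟨u, -, rfl⟩ := Finset.mem_image.1 hD
      rcases hcase with ⟨x, hx, y, hy, hred⟩ | ⟨⟨x, hx, y, hy, hbl⟩, hnall⟩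
      · rw [Finset.mem_singleton] at hx
        exact hA a ha y (hx ▸ hred)
      · rw [Finset.mem_singleton] at hx
        rw [hx] at hbl
        apply hnall
        intro x' hx' y' hy'
        rw [Finset.mem_singleton] at hx'
        rw [hx']
        by_cases hu : u ∈ A
        · have hyu : y = u := by
            have := hYD hy; simp [hcls, hu] at this; exact this
          have hy'u : y' = u := by
            have := hYD hy'; simp [hcls, hu] at this; exact this
          rw [hy'u, ← hyu]; exact hbl
        · have h1 := hcls_black u hu y (hYD hy) a ha
          have h2 := hcls_black u hu y' (hYD hy') a ha
          exact H.black_symm _ _ (h2.2 (h1.1 (H.black_symm _ _ hbl)))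
  have hcomp : H.CompleteFor A R := by
    intro B hB C hC hBC hdB hdC
    obtain ⟨u, -, rfl⟩ := Finset.mem_image.1 hB
    obtain ⟨u', -, rfl⟩ := Finset.mem_image.1 hC
    have hu : u ∉ A := fun h => Finset.disjoint_left.1 hdB (hmem_cls u) h
    have hu' : u' ∉ A := fun h => Finset.disjoint_left.1 hdC (hmem_cls u') h
    have hne' : u' ∉ cls u := fun h => hBC ((hcls_eq u u' h).symm)
    have : ∃ a ∈ A, ¬ (H.black u' a ↔ H.black u a) := by
      by_contra hc; push_neg at hc
      apply hne'
      simp only [hcls, if_neg hu, Finset.mem_filter, Finset.mem_univ, true_and]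
      exact ⟨hu', fun a ha => hc a ha⟩
    obtain ⟨a, ha, hniff⟩ := this
    intro hall
    apply hniff
    have h1 : (∃ b ∈ cls u, H.black b a) ↔ H.black u a := by
      constructor
      · rintro ⟨b, hb, hbl⟩; exact (hcls_black u hu b hb a ha).1 hbl
      · intro h; exact ⟨u, hmem_cls u, h⟩
    have h2 : (∃ c ∈ cls u', H.black c a) ↔ H.black u' a := by
      constructor
      · rintro ⟨c, hc, hbl⟩; exact (hcls_black u' hu' c hc a ha).1 hbl
      · intro h; exact ⟨u', hmem_cls u', h⟩
    rw [← h1, ← h2]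
    exact (hall a ha).symm
  refine ⟨len, f, hseq, fun i hi => hresp _ (hfmem i hi), ?_⟩
  rw [hflen, hlast]
  exact hcomp

set_option linter.unusedSectionVars false

section ApexV

local instance instDEqSub {v : V} : DecidableEq ↥({u : V | u ≠ v}) :=
  fun a b => Classical.propDecidable (a = b)

variable [Fintype V] (G : Trigraph V) (v : V)

/-- Lift a finset of the subtype `{u | u ≠ v}` to a finset of `V`. -/
def lift (C : Finset ↥({u : V | u ≠ v})) : Finset V := C.map (Function.Embedding.subtype _)

lemma mem_lift {C : Finset ↥({u : V | u ≠ v})} {x : V} :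
    x ∈ lift v C ↔ ∃ y ∈ C, (y : V) = x := by
  simp [lift]

lemma ne_v_of_mem_lift {C : Finset ↥({u : V | u ≠ v})} {x : V} (h : x ∈ lift v C) : x ≠ v := by
  obtain ⟨y, -, rfl⟩ := (mem_lift v).1 h
  exact y.2

lemma lift_disjoint {C D : Finset ↥({u : V | u ≠ v})} (h : Disjoint C D) :
    Disjoint (lift v C) (lift v D) := by
  rw [Finset.disjoint_left] at h ⊢
  intro x hx hx'
  obtain ⟨y, hy, rfl⟩ := (mem_lift v).1 hx
  obtain ⟨z, hz, hzy⟩ := (mem_lift v).1 hx'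
  rw [show z = y from Subtype.ext hzy] at hz
  exact h hy hz

lemma lift_union (C D : Finset ↥({u : V | u ≠ v})) : lift v (C ∪ D) = lift v C ∪ lift v D :=
  Finset.map_union _ _

lemma lift_nonempty {C : Finset ↥({u : V | u ≠ v})} : (lift v C).Nonempty ↔ C.Nonempty :=
  Finset.map_nonempty

lemma lift_singleton (y : ↥({u : V | u ≠ v})) : lift v {y} = {(y : V)} := rfl

lemma lift_subset_lift {C D : Finset ↥({u : V | u ≠ v})} (h : C ⊆ D) : lift v C ⊆ lift v D :=
  Finset.map_subset_map.2 h

/-- The half of a part consisting of black neighbours of `v`. -/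
def h1 (C : Finset ↥({u : V | u ≠ v})) : Finset V := (lift v C).filter (fun u => G.black v u)

/-- The half of a part consisting of non-neighbours of `v`. -/
def h2 (C : Finset ↥({u : V | u ≠ v})) : Finset V := (lift v C).filter (fun u => ¬ G.black v u)

lemma h1_subset (C : Finset ↥({u : V | u ≠ v})) : h1 G v C ⊆ lift v C := Finset.filter_subset _ _
lemma h2_subset (C : Finset ↥({u : V | u ≠ v})) : h2 G v C ⊆ lift v C := Finset.filter_subset _ _

lemma h1_black {C : Finset ↥({u : V | u ≠ v})} {x : V} (h : x ∈ h1 G v C) : G.black v x :=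
  (Finset.mem_filter.1 h).2

lemma h2_not_black {C : Finset ↥({u : V | u ≠ v})} {x : V} (h : x ∈ h2 G v C) : ¬ G.black v x :=
  (Finset.mem_filter.1 h).2

lemma h1_union (C D : Finset ↥({u : V | u ≠ v})) :
    h1 G v (C ∪ D) = h1 G v C ∪ h1 G v D := by
  rw [h1, lift_union, Finset.filter_union]; rfl

lemma h2_union (C D : Finset ↥({u : V | u ≠ v})) :
    h2 G v (C ∪ D) = h2 G v C ∪ h2 G v D := by
  rw [h2, lift_union, Finset.filter_union]; rfl

lemma disjoint_h1_h2 (C D : Finset ↥({u : V | u ≠ v})) : Disjoint (h1 G v C) (h2 G v D) := by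
  rw [Finset.disjoint_left]
  intro x hx hx'
  exact h2_not_black G v hx' (h1_black G v hx)

lemma disjoint_h1_h1 {C D : Finset ↥({u : V | u ≠ v})} (h : Disjoint C D) :
    Disjoint (h1 G v C) (h1 G v D) :=
  (lift_disjoint v h).mono (h1_subset G v C) (h1_subset G v D)

lemma disjoint_h2_h2 {C D : Finset ↥({u : V | u ≠ v})} (h : Disjoint C D) :
    Disjoint (h2 G v C) (h2 G v D) :=
  (lift_disjoint v h).mono (h2_subset G v C) (h2_subset G v D)

lemma ne_of_disj {X Y : Finset V} (hX : X.Nonempty) (hd : Disjoint X Y) : X ≠ Y := by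
  rintro rfl
  rw [disjoint_self, Finset.bot_eq_empty] at hd
  exact hX.ne_empty hd

lemma v_not_mem_h1 (C : Finset ↥({u : V | u ≠ v})) : v ∉ h1 G v C := fun h =>
  ne_v_of_mem_lift v (h1_subset G v C h) rfl

lemma v_not_mem_h2 (C : Finset ↥({u : V | u ≠ v})) : v ∉ h2 G v C := fun h =>
  ne_v_of_mem_lift v (h2_subset G v C h) rfl

lemma singleton_v_ne_h1 (C : Finset ↥({u : V | u ≠ v})) : ({v} : Finset V) ≠ h1 G v C := fun h =>
  v_not_mem_h1 G v C (h ▸ Finset.mem_singleton_self v)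

lemma singleton_v_ne_h2 (C : Finset ↥({u : V | u ≠ v})) : ({v} : Finset V) ≠ h2 G v C := fun h =>
  v_not_mem_h2 G v C (h ▸ Finset.mem_singleton_self v)

lemma h1_single {u : V} (hu : u ≠ v) (hb : G.black v u) : h1 G v {⟨u, hu⟩} = {u} := by
  ext x
  simp only [h1, lift, Finset.map_singleton, Function.Embedding.coe_subtype,
    Finset.mem_filter, Finset.mem_singleton]
  constructor
  · rintro ⟨rfl, -⟩; rfl
  · rintro rfl; exact ⟨rfl, hb⟩

lemma h1_single_empty {u : V} (hu : u ≠ v) (hb : ¬ G.black v u) : h1 G v {⟨u, hu⟩} = ∅ := by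
  ext x
  simp only [h1, lift, Finset.map_singleton, Function.Embedding.coe_subtype,
    Finset.mem_filter, Finset.mem_singleton, Finset.notMem_empty, iff_false, not_and]
  rintro rfl; exact hb

lemma h2_single {u : V} (hu : u ≠ v) (hb : ¬ G.black v u) : h2 G v {⟨u, hu⟩} = {u} := by
  ext x
  simp only [h2, lift, Finset.map_singleton, Function.Embedding.coe_subtype,
    Finset.mem_filter, Finset.mem_singleton]
  constructor
  · rintro ⟨rfl, -⟩; rfl
  · rintro rfl; exact ⟨rfl, hb⟩

lemma h2_single_empty {u : V} (hu : u ≠ v) (hb : G.black v u) : h2 G v {⟨u, hu⟩} = ∅ := by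
  ext x
  simp only [h2, lift, Finset.map_singleton, Function.Embedding.coe_subtype,
    Finset.mem_filter, Finset.mem_singleton, Finset.notMem_empty, iff_false, not_and]
  rintro rfl; exact fun h => h hb

/-- Refinement of a partition of `V ∖ {v}` into a partition of `V`: each part is split
into its `v`-neighbours and non-neighbours, and `v` is a singleton. -/
def refine (Q : Finset (Finset ↥({u : V | u ≠ v}))) : Finset (Finset V) :=
  insert {v} ((Q.biUnion fun C => {h1 G v C, h2 G v C}).filter Finset.Nonempty)

lemma mem_refine {Q : Finset (Finset ↥({u : V | u ≠ v}))} {X : Finset V} :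
    X ∈ refine G v Q ↔ X = {v} ∨ (X.Nonempty ∧ ∃ C ∈ Q, X = h1 G v C ∨ X = h2 G v C) := by
  simp only [refine, Finset.mem_insert, Finset.mem_filter, Finset.mem_biUnion,
    Finset.mem_insert, Finset.mem_singleton]
  constructor
  · rintro (rfl | ⟨⟨C, hC, h⟩, hne⟩)
    · exact Or.inl rfl
    · exact Or.inr ⟨hne, C, hC, h⟩
  · rintro (rfl | ⟨hne, C, hC, h⟩)
    · exact Or.inl rfl
    · exact Or.inr ⟨⟨C, hC, h⟩, hne⟩

lemma singleton_v_mem_refine (Q : Finset (Finset ↥({u : V | u ≠ v}))) :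
    ({v} : Finset V) ∈ refine G v Q := Finset.mem_insert_self _ _

lemma refine_discrete : refine G v (discretePart ↥({u : V | u ≠ v})) = discretePart V := by
  ext X
  rw [mem_refine]
  simp only [discretePart, Finset.mem_image, Finset.mem_univ, true_and]
  constructor
  · rintro (rfl | ⟨hXne, C, hC, hX⟩)
    · exact ⟨v, rfl⟩
    · obtain ⟨y, rfl⟩ : ∃ y, ({y} : Finset ↥({u : V | u ≠ v})) = C := by
        simpa [discretePart] using hC
      have hy : (⟨(y : V), y.2⟩ : ↥({u : V | u ≠ v})) = y := rfl
      by_cases hb : G.black v (y : V)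
      · rcases hX with rfl | rfl
        · exact ⟨(y : V), by rw [← hy, h1_single G v y.2 hb]⟩
        · rw [← hy, h2_single_empty G v y.2 hb] at hXne
          exact absurd rfl hXne.ne_empty
      · rcases hX with rfl | rfl
        · rw [← hy, h1_single_empty G v y.2 hb] at hXne
          exact absurd rfl hXne.ne_empty
        · exact ⟨(y : V), by rw [← hy, h2_single G v y.2 hb]⟩
  · rintro ⟨u, rfl⟩
    by_cases huv : u = v
    · exact Or.inl (by rw [huv])
    · refine Or.inr ⟨Finset.singleton_nonempty u, {⟨u, huv⟩}, by simp [discretePart], ?_⟩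
      by_cases hb : G.black v u
      · exact Or.inl (h1_single G v huv hb).symm
      · exact Or.inr (h2_single G v huv hb).symm

lemma isPart_refine {Q : Finset (Finset ↥({u : V | u ≠ v}))} (hQ : IsPart Q) :
    IsPart (refine G v Q) := by
  refine ⟨?_, ?_, ?_⟩
  · intro X hX
    rcases (mem_refine G v).1 hX with rfl | ⟨hne, -⟩
    · exact Finset.singleton_nonempty v
    · exact hne
  · intro X hX Y hY hne
    rcases (mem_refine G v).1 hX with rfl | ⟨hXne, C, hC, hXe⟩ <;>
      rcases (mem_refine G v).1 hY with h' | ⟨hYne, D, hD, hYe⟩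
    · exact absurd h'.symm hne
    · rcases hYe with rfl | rfl
      · simp only [Finset.disjoint_singleton_left]; exact v_not_mem_h1 G v D
      · simp only [Finset.disjoint_singleton_left]; exact v_not_mem_h2 G v D
    · subst h'
      rcases hXe with rfl | rfl
      · simp only [Finset.disjoint_singleton_right]; exact v_not_mem_h1 G v C
      · simp only [Finset.disjoint_singleton_right]; exact v_not_mem_h2 G v C
    · by_cases hCD : C = D
      · subst hCD
        rcases hXe with rfl | rfl <;> rcases hYe with rfl | rfl
        · exact absurd rfl hne
        · exact disjoint_h1_h2 G v C C
        · exact (disjoint_h1_h2 G v C C).symm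
        · exact absurd rfl hne
      · have hd := hQ.2.1 C hC D hD hCD
        rcases hXe with rfl | rfl <;> rcases hYe with rfl | rfl
        · exact disjoint_h1_h1 G v hd
        · exact disjoint_h1_h2 G v C D
        · exact (disjoint_h1_h2 G v D C).symm
        · exact disjoint_h2_h2 G v hd
  · intro u
    by_cases huv : u = v
    · exact ⟨{v}, singleton_v_mem_refine G v Q, by simp [huv]⟩
    · obtain ⟨C, hC, huC⟩ := hQ.2.2 ⟨u, huv⟩
      have hul : u ∈ lift v C := (mem_lift v).2 ⟨⟨u, huv⟩, huC, rfl⟩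
      by_cases hb : G.black v u
      · refine ⟨h1 G v C, (mem_refine G v).2 (Or.inr ⟨⟨u, ?_⟩, C, hC, Or.inl rfl⟩), ?_⟩ <;>
          exact Finset.mem_filter.2 ⟨hul, hb⟩
      · refine ⟨h2 G v C, (mem_refine G v).2 (Or.inr ⟨⟨u, ?_⟩, C, hC, Or.inr rfl⟩), ?_⟩ <;>
          exact Finset.mem_filter.2 ⟨hul, hb⟩

/-- Homogeneity of a part with respect to `v`. -/
def Homog (X : Finset V) : Prop := (∀ x ∈ X, G.black v x) ∨ (∀ x ∈ X, ¬ G.black v x)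

lemma homog_singleton_v : Homog G v {v} :=
  Or.inr (by intro x hx; rw [Finset.mem_singleton] at hx; rw [hx]; exact G.black_irrefl v)

lemma homog_singleton (a : V) : Homog G v {a} := by
  by_cases hb : G.black v a
  · exact Or.inl (by intro x hx; rw [Finset.mem_singleton] at hx; rw [hx]; exact hb)
  · exact Or.inr (by intro x hx; rw [Finset.mem_singleton] at hx; rw [hx]; exact hb)

lemma homog_h1 (C : Finset ↥({u : V | u ≠ v})) : Homog G v (h1 G v C) :=
  Or.inl fun _ hx => h1_black G v hx

lemma homog_h2 (C : Finset ↥({u : V | u ≠ v})) : Homog G v (h2 G v C) :=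
  Or.inr fun _ hx => h2_not_black G v hx

lemma Homog.mono {X Y : Finset V} (h : Homog G v X) (hYX : Y ⊆ X) : Homog G v Y := by
  rcases h with h | h
  · exact Or.inl fun x hx => h x (hYX hx)
  · exact Or.inr fun x hx => h x (hYX hx)

lemma not_redAdj_v_left {Y : Finset V} (hv : ∀ u, ¬ G.red v u) (hY : Homog G v Y) :
    ¬ G.redAdj {v} Y := by
  rintro ⟨hne, hcase⟩
  rcases hcase with ⟨a, ha, b, hb, hr⟩ | ⟨⟨a, ha, b, hb, hbl⟩, hnall⟩
  · rw [Finset.mem_singleton] at ha; exact hv b (ha ▸ hr)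
  · rw [Finset.mem_singleton] at ha
    rcases hY with hall | hnone
    · apply hnall
      intro x hx y hy
      rw [Finset.mem_singleton] at hx; rw [hx]
      exact hall y hy
    · exact hnone b hb (ha ▸ hbl)

lemma redAdj_lift {X Y : Finset V} {C D : Finset ↥({u : V | u ≠ v})}
    (hX : X ⊆ lift v C) (hY : Y ⊆ lift v D) (h : G.redAdj X Y) :
    C = D ∨ (G.induce {u : V | u ≠ v}).redAdj C D := by
  by_cases hCD : C = D
  · exact Or.inl hCD
  right
  refine ⟨hCD, ?_⟩
  rcases h.2 with ⟨a, ha, b, hb, hr⟩ | ⟨⟨a, ha, b, hb, hbl⟩, hnall⟩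
  · obtain ⟨ya, hya, hae⟩ := (mem_lift v).1 (hX ha)
    obtain ⟨yb, hyb, hbe⟩ := (mem_lift v).1 (hY hb)
    exact Or.inl ⟨ya, hya, yb, hyb, show G.red _ _ by rw [hae, hbe]; exact hr⟩
  · obtain ⟨ya, hya, hae⟩ := (mem_lift v).1 (hX ha)
    obtain ⟨yb, hyb, hbe⟩ := (mem_lift v).1 (hY hb)
    refine Or.inr ⟨⟨ya, hya, yb, hyb, show G.black _ _ by rw [hae, hbe]; exact hbl⟩,
      fun hall => hnall ?_⟩
    intro x hx y hy
    obtain ⟨zx, hzx, hxe⟩ := (mem_lift v).1 (hX hx)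
    obtain ⟨zy, hzy, hye⟩ := (mem_lift v).1 (hY hy)
    have := hall zx hzx zy hzy
    rw [← hxe, ← hye]
    exact this

/-- Master width bound: if every part of `P` other than `{v}` is a `v`-homogeneous
subset of (the lift of) its assigned parent in `Q`, and each parent has at most `2`
children (`3` for one special parent `S`), then the max red degree of `P` is at most
`2 d + 2`. -/
lemma master (hv : ∀ u, ¬ G.red v u) (Q : Finset (Finset ↥({u : V | u ≠ v})))
    (S : Finset ↥({u : V | u ≠ v})) (P : Finset (Finset V))
    (par : Finset V → Finset ↥({u : V | u ≠ v})) (d : ℕ)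
    (hQd : (G.induce {u : V | u ≠ v}).maxRedDeg Q ≤ d)
    (hpar : ∀ X ∈ P, X ≠ {v} → par X ∈ Q ∧ X ⊆ lift v (par X) ∧ Homog G v X)
    (hcnt : ∀ C ∈ Q, (P.filter fun X => X ≠ {v} ∧ par X = C).card ≤ if C = S then 3 else 2) :
    G.maxRedDeg P ≤ 2 * d + 2 := by
  rw [Trigraph.maxRedDeg]
  apply Finset.sup_le
  intro X hX
  by_cases hXv : X = {v}
  · subst hXv
    have hemp : P.filter (fun B => G.redAdj {v} B) = ∅ := by
      rw [Finset.filter_eq_empty_iff]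
      intro Y hY
      by_cases hYv : Y = {v}
      · subst hYv; exact not_redAdj_v_left G v hv (homog_singleton_v G v)
      · exact not_redAdj_v_left G v hv (hpar Y hY hYv).2.2
    rw [Trigraph.redDeg, hemp]
    simp
  obtain ⟨hXQ, hXsub, hXhom⟩ := hpar X hX hXv
  set G' := G.induce {u : V | u ≠ v} with hG'
  set N := Q.filter (G'.redAdj (par X)) with hNdef
  have hNd : N.card ≤ d := by
    have h0 : G'.redDeg Q (par X) ≤ G'.maxRedDeg Q := by
      rw [Trigraph.maxRedDeg]; exact Finset.le_sup hXQ
    rw [Trigraph.redDeg] at h0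
    exact le_trans h0 hQd
  set T := insert (par X) N with hT
  have hTQ : T ⊆ Q := Finset.insert_subset hXQ (Finset.filter_subset _ _)
  have hTcard : T.card ≤ d + 1 :=
    le_trans (Finset.card_insert_le _ _) (by omega)
  have hsubset : P.filter (fun B => G.redAdj X B) ⊆
      (P.filter fun Y => Y ≠ {v} ∧ par Y ∈ T).erase X := by
    intro Y hY
    rw [Finset.mem_filter] at hY
    obtain ⟨hYP, hadj⟩ := hY
    have hYX : Y ≠ X := (hadj.1).symm
    have hYv : Y ≠ {v} := by
      rintro rfl
      exact not_redAdj_v_left G v hv hXhom (redAdj_comm hadj)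
    obtain ⟨hYQ, hYsub, hYhom⟩ := hpar Y hYP hYv
    rw [Finset.mem_erase, Finset.mem_filter]
    refine ⟨hYX, hYP, hYv, ?_⟩
    rcases redAdj_lift G v hXsub hYsub hadj with heq | hadj'
    · exact Finset.mem_insert.2 (Or.inl heq.symm)
    · exact Finset.mem_insert_of_mem (Finset.mem_filter.2 ⟨hYQ, hadj'⟩)
  have hXmem : X ∈ P.filter fun Y => Y ≠ {v} ∧ par Y ∈ T :=
    Finset.mem_filter.2 ⟨hX, hXv, Finset.mem_insert_self _ _⟩
  have hbig : (P.filter fun Y => Y ≠ {v} ∧ par Y ∈ T)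
      = T.biUnion (fun C => P.filter fun Y => Y ≠ {v} ∧ par Y = C) := by
    ext Y
    simp only [Finset.mem_filter, Finset.mem_biUnion]
    constructor
    · rintro ⟨h1, h2, h3⟩; exact ⟨par Y, h3, h1, h2, rfl⟩
    · rintro ⟨C, hC, h1, h2, rfl⟩; exact ⟨h1, h2, hC⟩
  have hcard : (P.filter fun Y => Y ≠ {v} ∧ par Y ∈ T).card ≤ 2 * T.card + 1 := by
    rw [hbig, Finset.card_biUnion (by
      intro C hC C' hC' hne
      rw [Function.onFun, Finset.disjoint_left]
      rintro Y hY hY'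
      rw [Finset.mem_filter] at hY hY'
      exact hne (hY.2.2.symm.trans hY'.2.2))]
    have hsum : ∑ C ∈ T, (P.filter fun Y => Y ≠ {v} ∧ par Y = C).card
        ≤ ∑ C ∈ T, (if C = S then 3 else 2) :=
      Finset.sum_le_sum (fun C hC => hcnt C (hTQ hC))
    have h1 : ∀ C : Finset ↥({u : V | u ≠ v}), (if C = S then (3:ℕ) else 2)
        = 2 + (if C = S then 1 else 0) := by
      intro C; split_ifs <;> rfl
    have h2 : ∑ C ∈ T, (if C = S then (3:ℕ) else 2) ≤ 2 * T.card + 1 := by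
      simp_rw [h1]
      rw [Finset.sum_add_distrib, Finset.sum_const, smul_eq_mul]
      have h3 : (∑ C ∈ T, if C = S then (1:ℕ) else 0) ≤ 1 := by
        rw [Finset.sum_ite_eq' T S (fun _ => 1)]
        split_ifs <;> omega
      omega
    omega
  have hfinal : (P.filter (fun B => G.redAdj X B)).card
      ≤ (P.filter fun Y => Y ≠ {v} ∧ par Y ∈ T).card - 1 := by
    calc (P.filter (fun B => G.redAdj X B)).card
        ≤ ((P.filter fun Y => Y ≠ {v} ∧ par Y ∈ T).erase X).card := Finset.card_le_card hsubset
      _ = (P.filter fun Y => Y ≠ {v} ∧ par Y ∈ T).card - 1 := Finset.card_erase_of_mem hXmem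
  have hpos : 1 ≤ (P.filter fun Y => Y ≠ {v} ∧ par Y ∈ T).card :=
    Finset.card_pos.2 ⟨X, hXmem⟩
  rw [Trigraph.redDeg]
  omega

lemma redDeg_singleton_v_zero (hv : ∀ u, ¬ G.red v u) (P : Finset (Finset V))
    (hom : ∀ Y ∈ P, Y ≠ {v} → Homog G v Y) : G.redDeg P {v} = 0 := by
  rw [redDeg_eq_zero_iff]
  intro Y hY
  by_cases hYv : Y = {v}
  · subst hYv; exact not_redAdj_v_left G v hv (homog_singleton_v G v)
  · exact not_redAdj_v_left G v hv (hom Y hY hYv)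

lemma respects_master (hv : ∀ u, ¬ G.red v u) (A : Finset V) (hvA : v ∉ A)
    (Q : Finset (Finset ↥({u : V | u ≠ v})))
    (hQresp : (G.induce {u : V | u ≠ v}).Respects
      (A.subtype (· ∈ ({u : V | u ≠ v} : Set V))) Q)
    (P : Finset (Finset V)) (par : Finset V → Finset ↥({u : V | u ≠ v}))
    (hvP : ({v} : Finset V) ∈ P) (haP : ∀ a ∈ A, ({a} : Finset V) ∈ P)
    (hpar : ∀ X ∈ P, X ≠ {v} → par X ∈ Q ∧ X ⊆ lift v (par X) ∧ Homog G v X) :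
    G.Respects (insert v A) P := by
  constructor
  · intro a ha
    rcases Finset.mem_insert.1 ha with heq | ha
    · rw [heq]; exact hvP
    · exact haP a ha
  · intro a ha
    rcases Finset.mem_insert.1 ha with heq | ha
    · rw [heq]
      exact redDeg_singleton_v_zero G v hv P (fun Y hY hYv => (hpar Y hY hYv).2.2)
    · rw [redDeg_eq_zero_iff]
      have hav : a ≠ v := fun h => hvA (h ▸ ha)
      have haA' : (⟨a, hav⟩ : ↥({u : V | u ≠ v})) ∈
          A.subtype (· ∈ ({u : V | u ≠ v} : Set V)) := Finset.mem_subtype.2 ha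
      intro Y hY hadj
      by_cases hYv : Y = {v}
      · subst hYv
        exact not_redAdj_v_left G v hv (homog_singleton G v a) (redAdj_comm hadj)
      obtain ⟨hYQ, hYsub, hYhom⟩ := hpar Y hY hYv
      have hsing : ({a} : Finset V) ⊆ lift v {⟨a, hav⟩} :=
        le_of_eq (lift_singleton v ⟨a, hav⟩).symm
      rcases redAdj_lift G v hsing hYsub hadj with heq | hadj'
      · have hYsub' : Y ⊆ {a} := by
          have := heq ▸ hYsub
          rwa [lift_singleton] at this
        rcases Finset.subset_singleton_iff.1 hYsub' with rfl | rfl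
        · rcases hadj.2 with ⟨x, hx, y, hy, -⟩ | ⟨⟨x, hx, y, hy, -⟩, -⟩ <;>
            exact absurd hy (Finset.notMem_empty y)
        · exact hadj.1 rfl
      · exact (redDeg_eq_zero_iff.1 (hQresp.2 ⟨a, hav⟩ haA')) (par Y) hYQ hadj'

lemma singleton_mem_refine {Q : Finset (Finset ↥({u : V | u ≠ v}))} {a : V} (hav : a ≠ v)
    (hQ : ({(⟨a, hav⟩ : ↥({u : V | u ≠ v}))} : Finset _) ∈ Q) :
    ({a} : Finset V) ∈ refine G v Q := by
  rw [mem_refine]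
  right
  refine ⟨Finset.singleton_nonempty a, {⟨a, hav⟩}, hQ, ?_⟩
  by_cases hb : G.black v a
  · exact Or.inl (h1_single G v hav hb).symm
  · exact Or.inr (h2_single G v hav hb).symm

/-- Canonical parent assignment: choice of a part of `Q` whose half is `X`. -/
def parQ (Q : Finset (Finset ↥({u : V | u ≠ v}))) (X : Finset V) :
    Finset ↥({u : V | u ≠ v}) :=
  if h : ∃ C ∈ Q, X = h1 G v C ∨ X = h2 G v C then h.choose else ∅

lemma parQ_spec {Q : Finset (Finset ↥({u : V | u ≠ v}))} {X : Finset V}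
    (h : ∃ C ∈ Q, X = h1 G v C ∨ X = h2 G v C) :
    parQ G v Q X ∈ Q ∧ (X = h1 G v (parQ G v Q X) ∨ X = h2 G v (parQ G v Q X)) := by
  rw [parQ, dif_pos h]
  exact ⟨h.choose_spec.1, h.choose_spec.2⟩

lemma parQ_neg {Q : Finset (Finset ↥({u : V | u ≠ v}))} {X : Finset V}
    (h : ¬ ∃ C ∈ Q, X = h1 G v C ∨ X = h2 G v C) : parQ G v Q X = ∅ := by
  rw [parQ, dif_neg h]

lemma half_sub {X : Finset V} {D : Finset ↥({u : V | u ≠ v})}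
    (hXD : X = h1 G v D ∨ X = h2 G v D) : X ⊆ lift v D := by
  rcases hXD with rfl | rfl
  · exact h1_subset G v D
  · exact h2_subset G v D

lemma half_homog {X : Finset V} {D : Finset ↥({u : V | u ≠ v})}
    (hXD : X = h1 G v D ∨ X = h2 G v D) : Homog G v X := by
  rcases hXD with rfl | rfl
  · exact homog_h1 G v D
  · exact homog_h2 G v D

lemma ne_half_of_disjoint {X : Finset V} {D E : Finset ↥({u : V | u ≠ v})}
    (hX : X.Nonempty) (hsub : X ⊆ lift v D) (hd : Disjoint D E) :
    X ≠ h1 G v E ∧ X ≠ h2 G v E :=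
  ⟨ne_of_disj hX ((lift_disjoint v hd).mono hsub (h1_subset G v E)),
   ne_of_disj hX ((lift_disjoint v hd).mono hsub (h2_subset G v E))⟩

set_option maxHeartbeats 1000000 in
lemma width_refine (hv : ∀ u, ¬ G.red v u) {Q : Finset (Finset ↥({u : V | u ≠ v}))} (d : ℕ)
    (hQd : (G.induce {u : V | u ≠ v}).maxRedDeg Q ≤ d) :
    G.maxRedDeg (refine G v Q) ≤ 2 * d + 2 := by
  apply master G v hv Q ∅ (refine G v Q) (parQ G v Q) d hQd
  · intro X hX hXv
    rcases (mem_refine G v).1 hX with rfl | ⟨hXne, C, hC, hcase⟩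
    · exact absurd rfl hXv
    · obtain ⟨h1, h2⟩ := parQ_spec G v ⟨C, hC, hcase⟩
      exact ⟨h1, half_sub G v h2, half_homog G v h2⟩
  · intro C hC
    have hsub : ((refine G v Q).filter fun X => X ≠ {v} ∧ parQ G v Q X = C)
        ⊆ {h1 G v C, h2 G v C} := by
      intro X hX
      rw [Finset.mem_filter] at hX
      obtain ⟨hXr, hXv, hXp⟩ := hX
      rcases (mem_refine G v).1 hXr with rfl | ⟨hXne, C', hC', hcase⟩
      · exact absurd rfl hXv
      · obtain ⟨-, h2⟩ := parQ_spec G v ⟨C', hC', hcase⟩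
        rw [hXp] at h2
        simpa using h2
    have h4 : ({h1 G v C, h2 G v C} : Finset (Finset V)).card ≤ 2 := by
      have := Finset.card_insert_le (h1 G v C) ({h2 G v C} : Finset (Finset V))
      simpa using this
    have := le_trans (Finset.card_le_card hsub) h4
    split_ifs <;> omega

set_option maxHeartbeats 1000000 in
lemma respects_refine (hv : ∀ u, ¬ G.red v u) (A : Finset V) (hvA : v ∉ A)
    {Q : Finset (Finset ↥({u : V | u ≠ v}))}
    (hQresp : (G.induce {u : V | u ≠ v}).Respects
      (A.subtype (· ∈ ({u : V | u ≠ v} : Set V))) Q) :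
    G.Respects (insert v A) (refine G v Q) := by
  apply respects_master G v hv A hvA Q hQresp _ (parQ G v Q)
  · exact singleton_v_mem_refine G v Q
  · intro a ha
    have hav : a ≠ v := fun h => hvA (h ▸ ha)
    exact singleton_mem_refine G v hav (hQresp.1 ⟨a, hav⟩ (Finset.mem_subtype.2 ha))
  · intro X hX hXv
    rcases (mem_refine G v).1 hX with rfl | ⟨hXne, C, hC, hcase⟩
    · exact absurd rfl hXv
    · obtain ⟨h1, h2⟩ := parQ_spec G v ⟨C, hC, hcase⟩
      exact ⟨h1, half_sub G v h2, half_homog G v h2⟩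

lemma h1_union_h2 (C : Finset ↥({u : V | u ≠ v})) : h1 G v C ∪ h2 G v C = lift v C :=
  Finset.filter_union_filter_not_eq _ _

set_option maxHeartbeats 2000000 in
lemma step_refine (hv : ∀ u, ¬ G.red v u) (A : Finset V) (hvA : v ∉ A)
    {P Q : Finset (Finset ↥({u : V | u ≠ v}))} (hP : IsPart P)
    (hm : MergeStep P Q) (d : ℕ)
    (hQd : (G.induce {u : V | u ≠ v}).maxRedDeg Q ≤ d)
    (hQresp : (G.induce {u : V | u ≠ v}).Respects
      (A.subtype (· ∈ ({u : V | u ≠ v} : Set V))) Q) :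
    ∃ l : List (Finset (Finset V)), (refine G v P :: l).Chain' MergeStep ∧
      (refine G v P :: l).getLast (List.cons_ne_nil _ _) = refine G v Q ∧
      ∀ X ∈ l, G.maxRedDeg X ≤ 2 * d + 2 ∧ G.Respects (insert v A) X := by
  obtain ⟨B0, hB0, C0, hC0, hne, hQ⟩ := hm
  have hdisj : Disjoint B0 C0 := hP.2.1 B0 hB0 C0 hC0 hne
  have hB0ne : B0.Nonempty := hP.1 B0 hB0
  have hC0ne : C0.Nonempty := hP.1 C0 hC0
  have hBCne : (B0 ∪ C0).Nonempty := hB0ne.mono Finset.subset_union_left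
  have hQpart : IsPart Q := hP.merge ⟨B0, hB0, C0, hC0, hne, hQ⟩
  have hBC0Q : B0 ∪ C0 ∈ Q := hQ ▸ Finset.mem_insert_self _ _
  have hDQ : ∀ D ∈ P, D ≠ B0 → D ≠ C0 → D ∈ Q := fun D hD h1 h2 =>
    hQ ▸ Finset.mem_insert_of_mem (Finset.mem_erase.2 ⟨h2, Finset.mem_erase.2 ⟨h1, hD⟩⟩)
  have hdisjD : ∀ D ∈ P, D ≠ B0 → D ≠ C0 → Disjoint D (B0 ∪ C0) := fun D hD hdb hdc =>
    Finset.disjoint_union_right.2 ⟨hP.2.1 D hD B0 hB0 hdb, hP.2.1 D hD C0 hC0 hdc⟩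
  have h1u : h1 G v (B0 ∪ C0) = h1 G v B0 ∪ h1 G v C0 := h1_union G v B0 C0
  have h2u : h2 G v (B0 ∪ C0) = h2 G v B0 ∪ h2 G v C0 := h2_union G v B0 C0
  -- membership characterisation for `refine G v Q`
  have hmemQ : ∀ X : Finset V, X ∈ refine G v Q ↔ X = {v} ∨ (X.Nonempty ∧
      (X = h1 G v (B0 ∪ C0) ∨ X = h2 G v (B0 ∪ C0) ∨
        ∃ D ∈ P, D ≠ B0 ∧ D ≠ C0 ∧ (X = h1 G v D ∨ X = h2 G v D))) := by
    intro X
    rw [mem_refine]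
    constructor
    · rintro (rfl | ⟨hX, C, hC, hcase⟩)
      · exact Or.inl rfl
      · right
        refine ⟨hX, ?_⟩
        rw [hQ] at hC
        rcases Finset.mem_insert.1 hC with rfl | hC
        · rcases hcase with rfl | rfl
          · exact Or.inl rfl
          · exact Or.inr (Or.inl rfl)
        · rw [Finset.mem_erase, Finset.mem_erase] at hC
          exact Or.inr (Or.inr ⟨C, hC.2.2, hC.2.1, hC.1, hcase⟩)
    · rintro (rfl | ⟨hX, (rfl | rfl | ⟨D, hD, hd1, hd2, hcase⟩)⟩)
      · exact Or.inl rfl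
      · exact Or.inr ⟨hX, B0 ∪ C0, hBC0Q, Or.inl rfl⟩
      · exact Or.inr ⟨hX, B0 ∪ C0, hBC0Q, Or.inr rfl⟩
      · exact Or.inr ⟨hX, D, hDQ D hD hd1 hd2, hcase⟩
  -- singletons of `A` are untouched parts of `P`
  have hsingP : ∀ a ∈ A, ∃ hav : a ≠ v,
      ({(⟨a, hav⟩ : ↥({u : V | u ≠ v}))} : Finset _) ∈ P ∧
      ({(⟨a, hav⟩ : ↥({u : V | u ≠ v}))} : Finset _) ≠ B0 ∧
      ({(⟨a, hav⟩ : ↥({u : V | u ≠ v}))} : Finset _) ≠ C0 := by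
    intro a ha
    have hav : a ≠ v := fun h => hvA (h ▸ ha)
    refine ⟨hav, ?_⟩
    have hQs := hQresp.1 ⟨a, hav⟩ (Finset.mem_subtype.2 ha)
    rw [hQ] at hQs
    rcases Finset.mem_insert.1 hQs with heq | hQs
    · exfalso
      have hB0s : B0 ⊆ {(⟨a, hav⟩ : ↥({u : V | u ≠ v}))} := heq ▸ Finset.subset_union_left
      have hC0s : C0 ⊆ {(⟨a, hav⟩ : ↥({u : V | u ≠ v}))} := heq ▸ Finset.subset_union_right
      rcases Finset.subset_singleton_iff.1 hB0s with hB0e | hB0e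
      · exact hB0ne.ne_empty hB0e
      rcases Finset.subset_singleton_iff.1 hC0s with hC0e | hC0e
      · exact hC0ne.ne_empty hC0e
      exact hne (hB0e.trans hC0e.symm)
    · rw [Finset.mem_erase, Finset.mem_erase] at hQs
      exact ⟨hQs.2.2, hQs.2.1, hQs.1⟩
  have hsingH : ∀ (a : V) (hav : a ≠ v),
      ({a} : Finset V) = h1 G v {⟨a, hav⟩} ∨ ({a} : Finset V) = h2 G v {⟨a, hav⟩} := by
    intro a hav
    by_cases hb : G.black v a
    · exact Or.inl (h1_single G v hav hb).symm
    · exact Or.inr (h2_single G v hav hb).symm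
  by_cases hc1 : (h1 G v B0).Nonempty ∧ (h1 G v C0).Nonempty
  · -- the black halves both nonempty: a genuine intermediate step
    set mid := insert (h1 G v B0 ∪ h1 G v C0)
      (((refine G v P).erase (h1 G v B0)).erase (h1 G v C0)) with hmid
    have hms1 : MergeStep (refine G v P) mid := by
      refine ⟨h1 G v B0, ?_, h1 G v C0, ?_, ?_, rfl⟩
      · exact (mem_refine G v).2 (Or.inr ⟨hc1.1, B0, hB0, Or.inl rfl⟩)
      · exact (mem_refine G v).2 (Or.inr ⟨hc1.2, C0, hC0, Or.inl rfl⟩)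
      · exact ne_of_disj hc1.1 (disjoint_h1_h1 G v hdisj)
    have hmemM : ∀ X : Finset V, X ∈ mid ↔ X = {v} ∨ (X.Nonempty ∧
        (X = h1 G v (B0 ∪ C0) ∨ X = h2 G v B0 ∨ X = h2 G v C0 ∨
          ∃ D ∈ P, D ≠ B0 ∧ D ≠ C0 ∧ (X = h1 G v D ∨ X = h2 G v D))) := by
      intro X
      rw [hmid]
      simp only [Finset.mem_insert, Finset.mem_erase]
      constructor
      · rintro (rfl | ⟨hxb1, hxa1, hr⟩)
        · exact Or.inr ⟨hc1.1.mono Finset.subset_union_left, Or.inl h1u.symm⟩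
        · rcases (mem_refine G v).1 hr with rfl | ⟨hXne, D, hD, hcase⟩
          · exact Or.inl rfl
          · right
            refine ⟨hXne, ?_⟩
            by_cases hDB : D = B0
            · subst hDB
              rcases hcase with rfl | rfl
              · exact absurd rfl hxa1
              · exact Or.inr (Or.inl rfl)
            by_cases hDC : D = C0
            · subst hDC
              rcases hcase with rfl | rfl
              · exact absurd rfl hxb1
              · exact Or.inr (Or.inr (Or.inl rfl))
            · exact Or.inr (Or.inr (Or.inr ⟨D, hD, hDB, hDC, hcase⟩))
      · rintro (rfl | ⟨hXne, (rfl | rfl | rfl | ⟨D, hD, hd1, hd2, hcase⟩)⟩)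
        · exact Or.inr ⟨(singleton_v_ne_h1 G v C0), (singleton_v_ne_h1 G v B0),
            (mem_refine G v).2 (Or.inl rfl)⟩
        · exact Or.inl h1u
        · refine Or.inr ⟨ne_of_disj hXne ((disjoint_h1_h2 G v C0 B0).symm),
            ne_of_disj hXne ((disjoint_h1_h2 G v B0 B0).symm),
            (mem_refine G v).2 (Or.inr ⟨hXne, B0, hB0, Or.inr rfl⟩)⟩
        · refine Or.inr ⟨ne_of_disj hXne ((disjoint_h1_h2 G v C0 C0).symm),
            ne_of_disj hXne ((disjoint_h1_h2 G v B0 C0).symm),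
            (mem_refine G v).2 (Or.inr ⟨hXne, C0, hC0, Or.inr rfl⟩)⟩
        · have hsub := half_sub G v hcase
          exact Or.inr ⟨(ne_half_of_disjoint G v hXne hsub (hP.2.1 D hD C0 hC0 hd2)).1,
            (ne_half_of_disjoint G v hXne hsub (hP.2.1 D hD B0 hB0 hd1)).1,
            (mem_refine G v).2 (Or.inr ⟨hXne, D, hD, hcase⟩)⟩
    -- parent map for `mid`
    set parM : Finset V → Finset ↥({u : V | u ≠ v}) := fun X =>
      if X = h1 G v (B0 ∪ C0) ∨ X = h2 G v B0 ∨ X = h2 G v C0 then B0 ∪ C0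
      else parQ G v Q X with hparMdef
    have hparM : ∀ X ∈ mid, X ≠ {v} →
        parM X ∈ Q ∧ X ⊆ lift v (parM X) ∧ Homog G v X := by
      intro X hX hXv
      rcases (hmemM X).1 hX with rfl | ⟨hXne, hcase⟩
      · exact absurd rfl hXv
      rcases hcase with rfl | rfl | rfl | ⟨D, hD, hd1, hd2, hcase⟩
      · rw [hparMdef]
        beta_reduce
        rw [if_pos (Or.inl rfl)]
        exact ⟨hBC0Q, h1_subset G v _, homog_h1 G v _⟩
      · rw [hparMdef]
        beta_reduce
        rw [if_pos (Or.inr (Or.inl rfl))]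
        exact ⟨hBC0Q, (h2_subset G v B0).trans (lift_subset_lift v Finset.subset_union_left),
          homog_h2 G v _⟩
      · rw [hparMdef]
        beta_reduce
        rw [if_pos (Or.inr (Or.inr rfl))]
        exact ⟨hBC0Q, (h2_subset G v C0).trans (lift_subset_lift v Finset.subset_union_right),
          homog_h2 G v _⟩
      · have hsub := half_sub G v hcase
        have hn1 := (ne_half_of_disjoint G v hXne hsub (hdisjD D hD hd1 hd2)).1
        have hn2 := (ne_half_of_disjoint G v hXne hsub (hP.2.1 D hD B0 hB0 hd1)).2
        have hn3 := (ne_half_of_disjoint G v hXne hsub (hP.2.1 D hD C0 hC0 hd2)).2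
        have hcond : ¬(X = h1 G v (B0 ∪ C0) ∨ X = h2 G v B0 ∨ X = h2 G v C0) := by
          rintro (h | h | h)
          · exact hn1 h
          · exact hn2 h
          · exact hn3 h
        rw [hparMdef]
        beta_reduce
        rw [if_neg hcond]
        obtain ⟨hq1, hq2⟩ := parQ_spec G v ⟨D, hDQ D hD hd1 hd2, hcase⟩
        exact ⟨hq1, half_sub G v hq2, half_homog G v hq2⟩
    have hmidw : G.maxRedDeg mid ≤ 2 * d + 2 := by
      apply master G v hv Q (B0 ∪ C0) mid parM d hQd hparM
      intro C hC
      by_cases hCs : C = B0 ∪ C0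
      · rw [if_pos hCs]
        have hsub : (mid.filter fun X => X ≠ {v} ∧ parM X = C)
            ⊆ {h1 G v (B0 ∪ C0), h2 G v B0, h2 G v C0} := by
          intro X hX
          rw [Finset.mem_filter] at hX
          obtain ⟨hXm, hXv, hXp⟩ := hX
          by_cases hcond : X = h1 G v (B0 ∪ C0) ∨ X = h2 G v B0 ∨ X = h2 G v C0
          · simpa using hcond
          · rw [hparMdef] at hXp
            beta_reduce at hXp
            rw [if_neg hcond] at hXp
            by_cases hex : ∃ C' ∈ Q, X = h1 G v C' ∨ X = h2 G v C'
            · obtain ⟨-, hq2⟩ := parQ_spec G v hex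
              rw [hXp, hCs] at hq2
              rcases hq2 with hq2 | hq2
              · exact absurd (Or.inl hq2) hcond
              · exfalso
                rcases (hmemM X).1 hXm with rfl | ⟨hXne, hcase⟩
                · exact hXv rfl
                rcases hcase with h | h | h | ⟨D, hD, hd1, hd2, hcase⟩
                · exact hcond (Or.inl h)
                · exact hcond (Or.inr (Or.inl h))
                · exact hcond (Or.inr (Or.inr h))
                · exact (ne_half_of_disjoint G v hXne (half_sub G v hcase)
                    (hdisjD D hD hd1 hd2)).2 hq2
            · rw [parQ_neg G v hex] at hXp
              rw [hCs] at hXp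
              exact absurd hXp.symm hBCne.ne_empty
        have h3 : ({h1 G v (B0 ∪ C0), h2 G v B0, h2 G v C0} : Finset (Finset V)).card ≤ 3 := by
          apply le_trans (Finset.card_insert_le _ _)
          have := Finset.card_insert_le (h2 G v B0) ({h2 G v C0} : Finset (Finset V))
          simp only [Finset.card_singleton] at this
          omega
        exact le_trans (Finset.card_le_card hsub) h3
      · rw [if_neg hCs]
        have hsub : (mid.filter fun X => X ≠ {v} ∧ parM X = C) ⊆ {h1 G v C, h2 G v C} := by
          intro X hX
          rw [Finset.mem_filter] at hX
          obtain ⟨hXm, hXv, hXp⟩ := hX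
          by_cases hcond : X = h1 G v (B0 ∪ C0) ∨ X = h2 G v B0 ∨ X = h2 G v C0
          · exfalso
            rw [hparMdef] at hXp
            beta_reduce at hXp
            rw [if_pos hcond] at hXp
            exact hCs hXp.symm
          · rw [hparMdef] at hXp
            beta_reduce at hXp
            rw [if_neg hcond] at hXp
            by_cases hex : ∃ C' ∈ Q, X = h1 G v C' ∨ X = h2 G v C'
            · obtain ⟨-, hq2⟩ := parQ_spec G v hex
              rw [hXp] at hq2
              simpa using hq2
            · rw [parQ_neg G v hex] at hXp
              exact absurd hXp.symm (hQpart.1 C hC).ne_empty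
        have h4 : ({h1 G v C, h2 G v C} : Finset (Finset V)).card ≤ 2 := by
          have := Finset.card_insert_le (h1 G v C) ({h2 G v C} : Finset (Finset V))
          simpa using this
        exact le_trans (Finset.card_le_card hsub) h4
    have hvmid : ({v} : Finset V) ∈ mid := (hmemM {v}).2 (Or.inl rfl)
    have hamid : ∀ a ∈ A, ({a} : Finset V) ∈ mid := by
      intro a ha
      obtain ⟨hav, hPa, hnB, hnC⟩ := hsingP a ha
      exact (hmemM {a}).2 (Or.inr ⟨Finset.singleton_nonempty a, Or.inr (Or.inr (Or.inr
        ⟨{⟨a, hav⟩}, hPa, hnB, hnC, hsingH a hav⟩))⟩)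
    have hmidr : G.Respects (insert v A) mid :=
      respects_master G v hv A hvA Q hQresp mid parM hvmid hamid hparM
    by_cases hc2 : (h2 G v B0).Nonempty ∧ (h2 G v C0).Nonempty
    · -- two merge steps
      set fin := insert (h2 G v B0 ∪ h2 G v C0)
        ((mid.erase (h2 G v B0)).erase (h2 G v C0)) with hfin
      have hms2 : MergeStep mid fin := by
        refine ⟨h2 G v B0, ?_, h2 G v C0, ?_, ?_, rfl⟩
        · exact (hmemM _).2 (Or.inr ⟨hc2.1, Or.inr (Or.inl rfl)⟩)
        · exact (hmemM _).2 (Or.inr ⟨hc2.2, Or.inr (Or.inr (Or.inl rfl))⟩)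
        · exact ne_of_disj hc2.1 (disjoint_h2_h2 G v hdisj)
      have hfinQ : fin = refine G v Q := by
        ext X
        rw [hfin]
        simp only [Finset.mem_insert, Finset.mem_erase]
        rw [hmemQ X]
        constructor
        · rintro (rfl | ⟨hxb2, hxa2, hm⟩)
          · exact Or.inr ⟨hc2.1.mono Finset.subset_union_left, Or.inr (Or.inl h2u.symm)⟩
          · rcases (hmemM X).1 hm with rfl | ⟨hXne, hcase⟩
            · exact Or.inl rfl
            · right
              refine ⟨hXne, ?_⟩
              rcases hcase with rfl | rfl | rfl | ⟨D, hD, hd1, hd2, hcase⟩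
              · exact Or.inl rfl
              · exact absurd rfl hxa2
              · exact absurd rfl hxb2
              · exact Or.inr (Or.inr ⟨D, hD, hd1, hd2, hcase⟩)
        · rintro (rfl | ⟨hXne, (rfl | rfl | ⟨D, hD, hd1, hd2, hcase⟩)⟩)
          · exact Or.inr ⟨singleton_v_ne_h2 G v C0, singleton_v_ne_h2 G v B0,
              (hmemM _).2 (Or.inl rfl)⟩
          · exact Or.inr ⟨ne_of_disj hXne (disjoint_h1_h2 G v _ C0),
              ne_of_disj hXne (disjoint_h1_h2 G v _ B0),
              (hmemM _).2 (Or.inr ⟨hXne, Or.inl rfl⟩)⟩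
          · exact Or.inl h2u
          · have hsub := half_sub G v hcase
            exact Or.inr ⟨(ne_half_of_disjoint G v hXne hsub (hP.2.1 D hD C0 hC0 hd2)).2,
              (ne_half_of_disjoint G v hXne hsub (hP.2.1 D hD B0 hB0 hd1)).2,
              (hmemM _).2 (Or.inr ⟨hXne, Or.inr (Or.inr (Or.inr ⟨D, hD, hd1, hd2, hcase⟩))⟩)⟩
      refine ⟨[mid, fin], ?_, ?_, ?_⟩
      · exact List.isChain_cons_cons.2 ⟨hms1, List.isChain_cons_cons.2 ⟨hms2, List.isChain_singleton _⟩⟩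
      · simpa using hfinQ
      · intro X hX
        rcases List.mem_cons.1 hX with rfl | hX
        · exact ⟨hmidw, hmidr⟩
        · rcases List.mem_cons.1 hX with rfl | hX
          · rw [hfinQ]
            exact ⟨width_refine G v hv d hQd, respects_refine G v hv A hvA hQresp⟩
          · exact absurd hX (List.not_mem_nil (a := X))
    · -- one merge step: `mid = refine G v Q`
      have hc2' : h2 G v B0 = ∅ ∨ h2 G v C0 = ∅ := by
        rcases not_and_or.1 hc2 with h | h
        · exact Or.inl (Finset.not_nonempty_iff_eq_empty.1 h)
        · exact Or.inr (Finset.not_nonempty_iff_eq_empty.1 h)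
      have hmidQ : mid = refine G v Q := by
        ext X
        rw [hmemM X, hmemQ X]
        constructor
        · rintro (rfl | ⟨hXne, (rfl | rfl | rfl | ⟨D, hD, hd1, hd2, hcase⟩)⟩)
          · exact Or.inl rfl
          · exact Or.inr ⟨hXne, Or.inl rfl⟩
          · refine Or.inr ⟨hXne, Or.inr (Or.inl ?_)⟩
            rcases hc2' with h | h
            · exact absurd h hXne.ne_empty
            · rw [h2u, h, Finset.union_empty]
          · refine Or.inr ⟨hXne, Or.inr (Or.inl ?_)⟩
            rcases hc2' with h | h
            · rw [h2u, h, Finset.empty_union]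
            · exact absurd h hXne.ne_empty
          · exact Or.inr ⟨hXne, Or.inr (Or.inr ⟨D, hD, hd1, hd2, hcase⟩)⟩
        · rintro (rfl | ⟨hXne, (rfl | rfl | ⟨D, hD, hd1, hd2, hcase⟩)⟩)
          · exact Or.inl rfl
          · exact Or.inr ⟨hXne, Or.inl rfl⟩
          · rcases hc2' with h | h
            · refine Or.inr ⟨hXne, Or.inr (Or.inr (Or.inl ?_))⟩
              rw [h2u, h, Finset.empty_union]
            · refine Or.inr ⟨hXne, Or.inr (Or.inl ?_)⟩
              rw [h2u, h, Finset.union_empty]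
          · exact Or.inr ⟨hXne, Or.inr (Or.inr (Or.inr ⟨D, hD, hd1, hd2, hcase⟩))⟩
      refine ⟨[mid], ?_, ?_, ?_⟩
      · exact List.isChain_cons_cons.2 ⟨hms1, List.isChain_singleton _⟩
      · simpa using hmidQ
      · intro X hX
        rcases List.mem_cons.1 hX with rfl | hX
        · exact ⟨hmidw, hmidr⟩
        · exact absurd hX (List.not_mem_nil (a := X))
  · have hc1' : h1 G v B0 = ∅ ∨ h1 G v C0 = ∅ := by
      rcases not_and_or.1 hc1 with h | h
      · exact Or.inl (Finset.not_nonempty_iff_eq_empty.1 h)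
      · exact Or.inr (Finset.not_nonempty_iff_eq_empty.1 h)
    by_cases hc2 : (h2 G v B0).Nonempty ∧ (h2 G v C0).Nonempty
    · -- merge only the non-neighbour halves
      set mid := insert (h2 G v B0 ∪ h2 G v C0)
        (((refine G v P).erase (h2 G v B0)).erase (h2 G v C0)) with hmid
      have hms1 : MergeStep (refine G v P) mid := by
        refine ⟨h2 G v B0, ?_, h2 G v C0, ?_, ?_, rfl⟩
        · exact (mem_refine G v).2 (Or.inr ⟨hc2.1, B0, hB0, Or.inr rfl⟩)
        · exact (mem_refine G v).2 (Or.inr ⟨hc2.2, C0, hC0, Or.inr rfl⟩)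
        · exact ne_of_disj hc2.1 (disjoint_h2_h2 G v hdisj)
      have hmidQ : mid = refine G v Q := by
        ext X
        rw [hmid]
        simp only [Finset.mem_insert, Finset.mem_erase]
        rw [hmemQ X]
        constructor
        · rintro (rfl | ⟨hxb2, hxa2, hr⟩)
          · exact Or.inr ⟨hc2.1.mono Finset.subset_union_left, Or.inr (Or.inl h2u.symm)⟩
          · rcases (mem_refine G v).1 hr with rfl | ⟨hXne, D, hD, hcase⟩
            · exact Or.inl rfl
            · right
              refine ⟨hXne, ?_⟩
              by_cases hDB : D = B0
              · subst hDB
                rcases hcase with rfl | rfl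
                · rcases hc1' with h | h
                  · exact absurd h hXne.ne_empty
                  · refine Or.inl ?_
                    rw [h1u, h, Finset.union_empty]
                · exact absurd rfl hxa2
              by_cases hDC : D = C0
              · subst hDC
                rcases hcase with rfl | rfl
                · rcases hc1' with h | h
                  · refine Or.inl ?_
                    rw [h1u, h, Finset.empty_union]
                  · exact absurd h hXne.ne_empty
                · exact absurd rfl hxb2
              · exact Or.inr (Or.inr ⟨D, hD, hDB, hDC, hcase⟩)
        · rintro (rfl | ⟨hXne, (rfl | rfl | ⟨D, hD, hd1, hd2, hcase⟩)⟩)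
          · exact Or.inr ⟨singleton_v_ne_h2 G v C0, singleton_v_ne_h2 G v B0,
              (mem_refine G v).2 (Or.inl rfl)⟩
          · rcases hc1' with h | h
            · have hXb1 : h1 G v (B0 ∪ C0) = h1 G v C0 := by
                rw [h1u, h, Finset.empty_union]
              have hXne' : (h1 G v C0).Nonempty := hXb1 ▸ hXne
              rw [hXb1]
              exact Or.inr ⟨ne_of_disj hXne' (disjoint_h1_h2 G v C0 C0),
                ne_of_disj hXne' (disjoint_h1_h2 G v C0 B0),
                (mem_refine G v).2 (Or.inr ⟨hXne', C0, hC0, Or.inl rfl⟩)⟩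
            · have hXa1 : h1 G v (B0 ∪ C0) = h1 G v B0 := by
                rw [h1u, h, Finset.union_empty]
              have hXne' : (h1 G v B0).Nonempty := hXa1 ▸ hXne
              rw [hXa1]
              exact Or.inr ⟨ne_of_disj hXne' (disjoint_h1_h2 G v B0 C0),
                ne_of_disj hXne' (disjoint_h1_h2 G v B0 B0),
                (mem_refine G v).2 (Or.inr ⟨hXne', B0, hB0, Or.inl rfl⟩)⟩
          · exact Or.inl h2u
          · have hsub := half_sub G v hcase
            exact Or.inr ⟨(ne_half_of_disjoint G v hXne hsub (hP.2.1 D hD C0 hC0 hd2)).2,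
              (ne_half_of_disjoint G v hXne hsub (hP.2.1 D hD B0 hB0 hd1)).2,
              (mem_refine G v).2 (Or.inr ⟨hXne, D, hD, hcase⟩)⟩
      refine ⟨[mid], ?_, ?_, ?_⟩
      · exact List.isChain_cons_cons.2 ⟨hms1, List.isChain_singleton _⟩
      · simpa using hmidQ
      · intro X hX
        rcases List.mem_cons.1 hX with rfl | hX
        · rw [hmidQ]
          exact ⟨width_refine G v hv d hQd, respects_refine G v hv A hvA hQresp⟩
        · exact absurd hX (List.not_mem_nil (a := X))
    · -- no step at all: `refine G v P = refine G v Q`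
      have hc2' : h2 G v B0 = ∅ ∨ h2 G v C0 = ∅ := by
        rcases not_and_or.1 hc2 with h | h
        · exact Or.inl (Finset.not_nonempty_iff_eq_empty.1 h)
        · exact Or.inr (Finset.not_nonempty_iff_eq_empty.1 h)
      have hPQ : refine G v P = refine G v Q := by
        have hBfull : ¬ (h1 G v B0 = ∅ ∧ h2 G v B0 = ∅) := by
          rintro ⟨h1e, h2e⟩
          have : lift v B0 = ∅ := by rw [← h1_union_h2 G v B0, h1e, h2e, Finset.union_empty]
          exact ((lift_nonempty v).2 hB0ne).ne_empty this
        have hCfull : ¬ (h1 G v C0 = ∅ ∧ h2 G v C0 = ∅) := by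
          rintro ⟨h1e, h2e⟩
          have : lift v C0 = ∅ := by rw [← h1_union_h2 G v C0, h1e, h2e, Finset.union_empty]
          exact ((lift_nonempty v).2 hC0ne).ne_empty this
        have hcomb : (h1 G v B0 = ∅ ∧ h2 G v C0 = ∅) ∨ (h1 G v C0 = ∅ ∧ h2 G v B0 = ∅) := by
          rcases hc1' with h | h <;> rcases hc2' with h' | h'
          · exact absurd ⟨h, h'⟩ hBfull
          · exact Or.inl ⟨h, h'⟩
          · exact Or.inr ⟨h, h'⟩
          · exact absurd ⟨h, h'⟩ hCfull
        have key : ∀ (e1 : h1 G v (B0 ∪ C0) = h1 G v B0 ∪ h1 G v C0), True := fun _ => trivial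
        clear key
        rcases hcomb with ⟨hE1, hE2⟩ | ⟨hE1, hE2⟩
        · -- h1 B0 = ∅, h2 C0 = ∅ : h1(B∪C) = h1 C0, h2(B∪C) = h2 B0
          have k1 : h1 G v (B0 ∪ C0) = h1 G v C0 := by rw [h1u, hE1, Finset.empty_union]
          have k2 : h2 G v (B0 ∪ C0) = h2 G v B0 := by rw [h2u, hE2, Finset.union_empty]
          ext X
          rw [mem_refine, hmemQ X]
          constructor
          · rintro (rfl | ⟨hXne, D, hD, hcase⟩)
            · exact Or.inl rfl
            · right
              refine ⟨hXne, ?_⟩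
              by_cases hDB : D = B0
              · subst hDB
                rcases hcase with rfl | rfl
                · exact absurd hE1 hXne.ne_empty
                · exact Or.inr (Or.inl k2.symm)
              by_cases hDC : D = C0
              · subst hDC
                rcases hcase with rfl | rfl
                · exact Or.inl k1.symm
                · exact absurd hE2 hXne.ne_empty
              · exact Or.inr (Or.inr ⟨D, hD, hDB, hDC, hcase⟩)
          · rintro (rfl | ⟨hXne, (rfl | rfl | ⟨D, hD, hd1, hd2, hcase⟩)⟩)
            · exact Or.inl rfl
            · exact Or.inr ⟨hXne, C0, hC0, Or.inl k1⟩
            · exact Or.inr ⟨hXne, B0, hB0, Or.inr k2⟩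
            · exact Or.inr ⟨hXne, D, hD, hcase⟩
        · have k1 : h1 G v (B0 ∪ C0) = h1 G v B0 := by rw [h1u, hE1, Finset.union_empty]
          have k2 : h2 G v (B0 ∪ C0) = h2 G v C0 := by rw [h2u, hE2, Finset.empty_union]
          ext X
          rw [mem_refine, hmemQ X]
          constructor
          · rintro (rfl | ⟨hXne, D, hD, hcase⟩)
            · exact Or.inl rfl
            · right
              refine ⟨hXne, ?_⟩
              by_cases hDB : D = B0
              · subst hDB
                rcases hcase with rfl | rfl
                · exact Or.inl k1.symm
                · exact absurd hE2 hXne.ne_empty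
              by_cases hDC : D = C0
              · subst hDC
                rcases hcase with rfl | rfl
                · exact absurd hE1 hXne.ne_empty
                · exact Or.inr (Or.inl k2.symm)
              · exact Or.inr (Or.inr ⟨D, hD, hDB, hDC, hcase⟩)
          · rintro (rfl | ⟨hXne, (rfl | rfl | ⟨D, hD, hd1, hd2, hcase⟩)⟩)
            · exact Or.inl rfl
            · exact Or.inr ⟨hXne, B0, hB0, Or.inl k1⟩
            · exact Or.inr ⟨hXne, C0, hC0, Or.inr k2⟩
            · exact Or.inr ⟨hXne, D, hD, hcase⟩
      exact ⟨[], List.isChain_singleton _, by simpa using hPQ, by intro X hX; cases hX⟩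

lemma complete_refine (A : Finset V) {Q : Finset (Finset ↥({u : V | u ≠ v}))}
    (hQ : IsPart Q)
    (hQresp : (G.induce {u : V | u ≠ v}).Respects
      (A.subtype (· ∈ ({u : V | u ≠ v} : Set V))) Q)
    (hQc : (G.induce {u : V | u ≠ v}).CompleteFor
      (A.subtype (· ∈ ({u : V | u ≠ v} : Set V))) Q) :
    G.CompleteFor (insert v A) (refine G v Q) := by
  intro B hB C hC hBC hdB hdC hiff
  have hBv : B ≠ {v} := by
    rintro rfl
    exact (Finset.disjoint_left.1 hdB (Finset.mem_singleton_self v)) (Finset.mem_insert_self v A)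
  have hCv : C ≠ {v} := by
    rintro rfl
    exact (Finset.disjoint_left.1 hdC (Finset.mem_singleton_self v)) (Finset.mem_insert_self v A)
  rcases (mem_refine G v).1 hB with rfl | ⟨hBne, B', hB', hBc⟩
  · exact hBv rfl
  rcases (mem_refine G v).1 hC with rfl | ⟨hCne, C', hC', hCc⟩
  · exact hCv rfl
  have hiv := hiff v (Finset.mem_insert_self v A)
  have hBside : (B = h1 G v B' ∧ (∃ b ∈ B, G.black b v)) ∨
      (B = h2 G v B' ∧ ¬ ∃ b ∈ B, G.black b v) := by
    rcases hBc with rfl | rfl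
    · obtain ⟨b, hb⟩ := hBne
      exact Or.inl ⟨rfl, b, hb, G.black_symm _ _ (h1_black G v hb)⟩
    · refine Or.inr ⟨rfl, ?_⟩
      rintro ⟨b, hb, hbl⟩
      exact h2_not_black G v hb (G.black_symm _ _ hbl)
  have hCside : (C = h1 G v C' ∧ (∃ c ∈ C, G.black c v)) ∨
      (C = h2 G v C' ∧ ¬ ∃ c ∈ C, G.black c v) := by
    rcases hCc with rfl | rfl
    · obtain ⟨c, hc⟩ := hCne
      exact Or.inl ⟨rfl, c, hc, G.black_symm _ _ (h1_black G v hc)⟩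
    · refine Or.inr ⟨rfl, ?_⟩
      rintro ⟨c, hc, hbl⟩
      exact h2_not_black G v hc (G.black_symm _ _ hbl)
  -- the two parts are halves of the same type
  have hB'C' : B' ≠ C' := by
    rintro rfl
    rcases hBside with ⟨hB1, hBex⟩ | ⟨hB2, hBnex⟩ <;>
      rcases hCside with ⟨hC1, hCex⟩ | ⟨hC2, hCnex⟩
    · exact hBC (hB1.trans hC1.symm)
    · exact hCnex (hiv.1 hBex)
    · exact hBnex (hiv.2 hCex)
    · exact hBC (hB2.trans hC2.symm)
  have hdB' : Disjoint B' (A.subtype (· ∈ ({u : V | u ≠ v} : Set V))) := by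
    rw [Finset.disjoint_left]
    intro x hxB' hxA'
    have hsx := hQresp.1 x hxA'
    have hBx : B' = {x} := eq_singleton_of_mem hQ hB' hsx hxB'
    have hBsub : B ⊆ {(x : V)} := by
      rw [← lift_singleton v x, ← hBx]
      exact half_sub G v hBc
    rcases Finset.subset_singleton_iff.1 hBsub with he | he
    · exact hBne.ne_empty he
    · exact (Finset.disjoint_left.1 hdB (he ▸ Finset.mem_singleton_self (x : V)))
        (Finset.mem_insert_of_mem (Finset.mem_subtype.1 hxA'))
  have hdC' : Disjoint C' (A.subtype (· ∈ ({u : V | u ≠ v} : Set V))) := by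
    rw [Finset.disjoint_left]
    intro x hxC' hxA'
    have hsx := hQresp.1 x hxA'
    have hCx : C' = {x} := eq_singleton_of_mem hQ hC' hsx hxC'
    have hCsub : C ⊆ {(x : V)} := by
      rw [← lift_singleton v x, ← hCx]
      exact half_sub G v hCc
    rcases Finset.subset_singleton_iff.1 hCsub with he | he
    · exact hCne.ne_empty he
    · exact (Finset.disjoint_left.1 hdC (he ▸ Finset.mem_singleton_self (x : V)))
        (Finset.mem_insert_of_mem (Finset.mem_subtype.1 hxA'))
  apply hQc B' hB' C' hC' hB'C' hdB' hdC'
  intro x hxA'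
  have hx := hiff (x : V) (Finset.mem_insert_of_mem (Finset.mem_subtype.1 hxA'))
  have hkey : ∀ (D' : Finset ↥({u : V | u ≠ v})) (D : Finset V), D' ∈ Q → D.Nonempty →
      D ⊆ lift v D' → Disjoint D' (A.subtype (· ∈ ({u : V | u ≠ v} : Set V))) →
      ((∃ y ∈ D', (G.induce {u : V | u ≠ v}).black y x) ↔ ∃ b ∈ D, G.black b (x : V)) := by
    intro D' D hD' hDne hDsub hdisj'
    constructor
    · rintro ⟨y, hy, hbl⟩
      have h0 := redDeg_eq_zero_iff.1 (hQresp.2 x hxA') D' hD'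
      have hxD' : ({x} : Finset ↥({u : V | u ≠ v})) ≠ D' := by
        intro he
        exact Finset.disjoint_left.1 hdisj' (he ▸ Finset.mem_singleton_self x) hxA'
      have hall : ∀ y' ∈ D', (G.induce {u : V | u ≠ v}).black x y' := by
        by_contra hc
        push_neg at hc
        obtain ⟨y', hy', hnbl⟩ := hc
        exact h0 ⟨hxD', Or.inr ⟨⟨x, Finset.mem_singleton_self x, y, hy,
          (G.induce {u : V | u ≠ v}).black_symm _ _ hbl⟩,
          fun hall2 => hnbl (hall2 x (Finset.mem_singleton_self x) y' hy')⟩⟩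
      obtain ⟨b, hb⟩ := hDne
      obtain ⟨yb, hyb, hybe⟩ := (mem_lift v).1 (hDsub hb)
      refine ⟨b, hb, G.black_symm _ _ ?_⟩
      rw [← hybe]
      exact hall yb hyb
    · rintro ⟨b, hb, hbl⟩
      obtain ⟨yb, hyb, hybe⟩ := (mem_lift v).1 (hDsub hb)
      refine ⟨yb, hyb, show G.black _ _ from ?_⟩
      rw [hybe]
      exact hbl
  rw [hkey B' B hB' hBne (half_sub G v hBc) hdB', hkey C' C hC' hCne (half_sub G v hCc) hdC']
  exact hx

lemma refine_chain (hv : ∀ u, ¬ G.red v u) (A : Finset V) (hvA : v ∉ A)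
    {len : ℕ} {g : ℕ → Finset (Finset ↥({u : V | u ≠ v}))}
    (hseq : IsCSeq ↥({u : V | u ≠ v}) len g)
    (hresp : ∀ i ≤ len, (G.induce {u : V | u ≠ v}).Respects
      (A.subtype (· ∈ ({u : V | u ≠ v} : Set V))) (g i))
    (d : ℕ) (hwidth : ∀ i ≤ len, (G.induce {u : V | u ≠ v}).maxRedDeg (g i) ≤ d) :
    ∃ (L : List (Finset (Finset V))) (hne : L ≠ []), L.head hne = discretePart V ∧
      L.Chain' MergeStep ∧ L.getLast hne = refine G v (g len) ∧
      ∀ X ∈ L, G.maxRedDeg X ≤ 2 * d + 2 ∧ G.Respects (insert v A) X := by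
  suffices h : ∀ k ≤ len, ∃ (L : List (Finset (Finset V))) (hne : L ≠ []),
      L.head hne = discretePart V ∧ L.Chain' MergeStep ∧ L.getLast hne = refine G v (g k) ∧
      ∀ X ∈ L, G.maxRedDeg X ≤ 2 * d + 2 ∧ G.Respects (insert v A) X from h len le_rfl
  intro k
  induction k with
  | zero =>
    intro _
    refine ⟨[refine G v (g 0)], by simp, ?_, List.isChain_singleton _, by simp, ?_⟩
    · show refine G v (g 0) = discretePart V
      rw [hseq.1, refine_discrete]
    · intro X hX
      rcases List.mem_cons.1 hX with rfl | hX
      · exact ⟨width_refine G v hv d (hwidth 0 (Nat.zero_le _)),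
          respects_refine G v hv A hvA (hresp 0 (Nat.zero_le _))⟩
      · exact absurd hX (List.not_mem_nil (a := X))
  | succ k ih =>
    intro hk
    obtain ⟨L, hne, hhead, hchain, hlast, hmem⟩ := ih (Nat.le_of_succ_le hk)
    obtain ⟨l, hchain2, hlast2, hmem2⟩ := step_refine G v hv A hvA
      (isPart_of_cseq hseq k (Nat.le_of_succ_le hk)) (hseq.2 k (Nat.lt_of_succ_le hk)) d
      (hwidth (k + 1) hk) (hresp (k + 1) hk)
    refine ⟨L ++ l, by simp [hne], ?_, ?_, ?_, ?_⟩
    · rw [List.head_append_of_ne_nil hne]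
      exact hhead
    · apply hchain.append (List.isChain_cons.1 hchain2).2
      intro x hx y hy
      rw [List.getLast?_eq_getLast hne] at hx
      cases hx
      have := (List.isChain_cons.1 hchain2).1 y hy
      rwa [hlast]
    · by_cases hl : l = []
      · subst hl
        have : refine G v (g k) = refine G v (g (k + 1)) := by simpa using hlast2
        rw [← this, ← hlast]
        simp only [List.append_nil]
      · rw [List.getLast_append_of_ne_nil _ hl]
        have : l.getLast hl = (refine G v (g k) :: l).getLast (List.cons_ne_nil _ _) :=
          (List.getLast_cons hl).symm
        rw [this, hlast2]
    · intro X hX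
      rcases List.mem_append.1 hX with hX | hX
      · exact hmem X hX
      · exact hmem2 X hX

end ApexV

end ApexAux

/-- apex theorem for respecting twin-width: for a vertex `v` of red
degree 0 and `A ⊆ V(G) ∖ {v}`, `tww(G, A ∪ {v}) ≤ 2·tww(G − v, A) + 2`. -/
theorem twwR_insert_apex {V : Type*} [Fintype V] (G : Trigraph V) (v : V)
    (hv : ∀ u, ¬ G.red v u) (A : Finset V) (hvA : v ∉ A) :
    G.twwR (insert v A) ≤
      2 * (G.induce {u | u ≠ v}).twwR (A.subtype (· ∈ ({u | u ≠ v} : Set V))) + 2 := by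
  classical
  by_cases hred : ∃ a ∈ A, ∃ u, G.red a u
  · -- some vertex of `A` has a red edge: no respecting sequence exists at all
    obtain ⟨a, haA, u, hredu⟩ := hred
    have hemp : {w : ℕ | ∃ (len : ℕ) (f : ℕ → Finset (Finset V)), IsCSeq V len f ∧
        (∀ i ≤ len, G.Respects (insert v A) (f i)) ∧ G.CompleteFor (insert v A) (f len) ∧
        ∀ i ≤ len, G.maxRedDeg (f i) ≤ w} = ∅ := by
      rw [Set.eq_empty_iff_forall_notMem]
      rintro w ⟨len, f, hseq, hresp, -, -⟩
      have h0 := (hresp 0 (Nat.zero_le _)).2 a (Finset.mem_insert_of_mem haA)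
      rw [hseq.1, ApexAux.redDeg_eq_zero_iff] at h0
      have hau : a ≠ u := fun h => G.red_irrefl u (h ▸ hredu)
      have hmemu : ({u} : Finset V) ∈ discretePart V := by simp [discretePart]
      exact h0 {u} hmemu ⟨fun hh => hau (Finset.singleton_injective hh),
        Or.inl ⟨a, Finset.mem_singleton_self a, u, Finset.mem_singleton_self u, hredu⟩⟩
    have hz : G.twwR (insert v A) = 0 := by
      unfold Trigraph.twwR
      rw [hemp]
      exact Nat.sInf_empty
    omega
  · push_neg at hred
    have hA'nored : ∀ a' ∈ A.subtype (· ∈ ({u : V | u ≠ v} : Set V)), ∀ u',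
        ¬ (G.induce {u : V | u ≠ v}).red a' u' := by
      intro a' ha' u' h
      exact hred a' (Finset.mem_subtype.1 ha') u' h
    obtain ⟨len0, f0, hseq0, hresp0, hcomp0⟩ := ApexAux.exists_complete_seq
      (G.induce {u : V | u ≠ v}) (A.subtype (· ∈ ({u : V | u ≠ v} : Set V))) hA'nored
    set S := {w : ℕ | ∃ (len : ℕ) (f : ℕ → Finset (Finset ↥({u : V | u ≠ v}))),
      IsCSeq ↥({u : V | u ≠ v}) len f ∧
      (∀ i ≤ len, (G.induce {u : V | u ≠ v}).Respects
        (A.subtype (· ∈ ({u : V | u ≠ v} : Set V))) (f i)) ∧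
      (G.induce {u : V | u ≠ v}).CompleteFor
        (A.subtype (· ∈ ({u : V | u ≠ v} : Set V))) (f len) ∧
      ∀ i ≤ len, (G.induce {u : V | u ≠ v}).maxRedDeg (f i) ≤ w} with hS
    have hSne : S.Nonempty := by
      refine ⟨(Finset.range (len0 + 1)).sup
        (fun i => (G.induce {u : V | u ≠ v}).maxRedDeg (f0 i)),
        len0, f0, hseq0, hresp0, hcomp0, fun i hi => ?_⟩
      have hir : i ∈ Finset.range (len0 + 1) := Finset.mem_range.2 (Nat.lt_succ_of_le hi)
      exact Finset.le_sup (f := fun i => (G.induce {u : V | u ≠ v}).maxRedDeg (f0 i)) hir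
    have hdm := Nat.sInf_mem hSne
    obtain ⟨len, g, hseq, hresp, hcomp, hwidth⟩ := hdm
    obtain ⟨L, hne, hhead, hchain, hlast, hmem⟩ :=
      ApexAux.refine_chain G v hv A hvA hseq hresp (sInf S) hwidth
    obtain ⟨len2, f, hseq2, hflast, hfmem⟩ := ApexAux.chain_to_seq hne hhead hchain
    have hd : (G.induce {u : V | u ≠ v}).twwR
        (A.subtype (· ∈ ({u : V | u ≠ v} : Set V))) = sInf S := by rw [hS]; rfl
    have hgoal : G.twwR (insert v A) ≤ 2 * sInf S + 2 := by
      apply Nat.sInf_le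
      refine ⟨len2, f, hseq2, fun i hi => (hmem _ (hfmem i hi)).2, ?_,
        fun i hi => (hmem _ (hfmem i hi)).1⟩
      rw [hflast, hlast]
      exact ApexAux.complete_refine G v A (ApexAux.isPart_of_cseq hseq len le_rfl)
        (hresp len le_rfl) hcomp
    rw [← hd] at hgoal
    exact hgoal

end
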